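/- arXiv:1501.06520 — 8 statements merged into one kernel-verified Lean document; each statement's English description precedes it below -/
import Mathlib

section
/- (First variation formula for a higher-order Lagrangian, standard case.) Let n, k ≥ 1, t₀ < t₁, let L : (Fin (k+1) → ℝ^n) → ℝ be smooth, and let q, h : ℝ → ℝ^n be smooth with h^{(j)}(t₀) = h^{(j)}(t₁) = 0 for all 0 ≤ j ≤ k−1. Then the function s ↦ ∫_{t₀}^{t₁} L(jet_k(q + s•h)(t)) dt is differentiable at s = 0, and its derivative there equals ∫_{t₀}^{t₁} ( ∑_{r=0}^{k} (−1)^r · D^r[t ↦ ∂_rL(jet_k q(t))](t) )(h(t)) dt, where D^r denotes the r-th iterated derivative of the (ℝ^n →ₗ[ℝ] ℝ)-valued map t ↦ ∂_rL(jet_k q(t)). -/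
noncomputable section

/-- Partial Fréchet derivative in slot `r` of a map defined on `Fin m → E`,
as a continuous linear map (zero junk value for `r ≥ m`). -/
def pd {m : ℕ} {E W : Type*} [NormedAddCommGroup E] [NormedSpace ℝ E]
    [NormedAddCommGroup W] [NormedSpace ℝ W]
    (F : (Fin m → E) → W) (r : ℕ) (A : Fin m → E) : E →L[ℝ] W :=
  if h : r < m then
    (fderiv ℝ F A).comp
      (ContinuousLinearMap.pi (Pi.single (⟨r, h⟩ : Fin m) (ContinuousLinearMap.id ℝ E)))
  else 0

/-- The `k`-jet of a curve: `jet k q t = (q t, q' t, …, q^{(k)} t)`. -/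
def jet {E : Type*} [NormedAddCommGroup E] [NormedSpace ℝ E] (k : ℕ) (q : ℝ → E) (t : ℝ) :
    Fin (k + 1) → E := fun r => iteratedDeriv r q t

section FirstVariationHelpers

open Set MeasureTheory Metric intervalIntegral

variable {E : Type*} [NormedAddCommGroup E] [NormedSpace ℝ E]

lemma contDiff_iteratedDeriv' (r : ℕ) {q : ℝ → E} (hq : ContDiff ℝ (⊤:ℕ∞) q) :
    ContDiff ℝ (⊤:ℕ∞) (iteratedDeriv r q) := by
  rw [iteratedDeriv_eq_iterate]; exact hq.iterate_deriv r

lemma jet_smooth (k : ℕ) {q : ℝ → E} (hq : ContDiff ℝ (⊤:ℕ∞) q) :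
    ContDiff ℝ (⊤:ℕ∞) (jet k q) :=
  contDiff_pi.2 fun r => contDiff_iteratedDeriv' r hq

lemma jet_add_smul (k : ℕ) {q h : ℝ → E} (hq : ContDiff ℝ (⊤:ℕ∞) q) (hh : ContDiff ℝ (⊤:ℕ∞) h)
    (s t : ℝ) : jet k (q + s • h) t = jet k q t + s • jet k h t := by
  funext r
  simp only [jet, Pi.add_apply, Pi.smul_apply]
  rw [iteratedDeriv_eq_iteratedFDeriv, iteratedDeriv_eq_iteratedFDeriv,
    iteratedDeriv_eq_iteratedFDeriv]
  have hq' : ContDiff ℝ ((r:ℕ) : ℕ∞) q := hq.of_le (mod_cast le_top)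
  have hh' : ContDiff ℝ ((r:ℕ) : ℕ∞) h := hh.of_le (mod_cast le_top)
  have hsh : ContDiff ℝ ((r:ℕ) : ℕ∞) (s • h) := hh'.const_smul s
  rw [iteratedFDeriv_add_apply hq'.contDiffAt hsh.contDiffAt,
    iteratedFDeriv_const_smul_apply hh'.contDiffAt]
  rfl

lemma pd_apply {m : ℕ} {W : Type*} [NormedAddCommGroup W] [NormedSpace ℝ W]
    (F : (Fin m → E) → W) (i : Fin m) (A : Fin m → E) (x : E) :
    pd F i A x = fderiv ℝ F A (Pi.single i x) := by
  simp only [pd, dif_pos i.isLt, Fin.eta, ContinuousLinearMap.comp_apply]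
  congr 1
  funext j
  simp only [ContinuousLinearMap.pi_apply, Pi.single_apply]
  by_cases hj : j = i <;> simp [hj]

lemma fderiv_jet_apply {k : ℕ} (L : (Fin (k+1) → E) → ℝ) (q h : ℝ → E) (t : ℝ) :
    fderiv ℝ L (jet k q t) (jet k h t)
      = ∑ r ∈ Finset.range (k+1), pd L r (jet k q t) (iteratedDeriv r h t) := by
  have hv : jet k h t = ∑ i : Fin (k+1), Pi.single i (iteratedDeriv (i:ℕ) h t) :=
    (Finset.univ_sum_single (jet k h t)).symm
  rw [← Fin.sum_univ_eq_sum_range (fun r => pd L r (jet k q t) (iteratedDeriv r h t)) (k+1)]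
  conv_lhs => rw [hv]
  rw [map_sum]
  exact Finset.sum_congr rfl fun i _ => (pd_apply L i (jet k q t) _).symm

lemma pd_comp_smooth {k : ℕ} {L : (Fin (k+1) → E) → ℝ} (hL : ContDiff ℝ (⊤:ℕ∞) L)
    {q : ℝ → E} (hq : ContDiff ℝ (⊤:ℕ∞) q) (r : ℕ) (hr : r < k + 1) :
    ContDiff ℝ (⊤:ℕ∞) (fun t => pd L r (jet k q t)) := by
  have hfd : ContDiff ℝ (⊤:ℕ∞) (fun A => fderiv ℝ L A) :=
    hL.fderiv_right (mod_cast le_top)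
  have hcomp : ContDiff ℝ (⊤:ℕ∞) (fun t => fderiv ℝ L (jet k q t)) :=
    hfd.comp (jet_smooth k hq)
  simp only [pd, dif_pos hr]
  exact (((ContinuousLinearMap.compL ℝ E (Fin (k+1) → E) ℝ).flip
    (ContinuousLinearMap.pi (Pi.single (⟨r, hr⟩ : Fin (k+1))
      (ContinuousLinearMap.id ℝ E)))).contDiff).comp hcomp

lemma ibp_step {f : ℝ → E →L[ℝ] ℝ} {u : ℝ → E} (hf : ContDiff ℝ (⊤:ℕ∞) f)
    (hu : ContDiff ℝ (⊤:ℕ∞) u) (t₀ t₁ : ℝ) (h0 : u t₀ = 0) (h1 : u t₁ = 0) :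
    ∫ t in t₀..t₁, f t (deriv u t) = - ∫ t in t₀..t₁, (deriv f t) (u t) := by
  have hfd : Differentiable ℝ f := hf.differentiable (by simp)
  have hud : Differentiable ℝ u := hu.differentiable (by simp)
  have hcf' : Continuous (deriv f) := (hf.iterate_deriv 1).continuous
  have hcu' : Continuous (deriv u) := (hu.iterate_deriv 1).continuous
  have key : ∀ t ∈ uIcc t₀ t₁, HasDerivAt (fun t => f t (u t))
      ((deriv f t) (u t) + f t (deriv u t)) t := fun t _ =>
    ((hfd t).hasDerivAt).clm_apply ((hud t).hasDerivAt)
  have c1 : Continuous fun t => (deriv f t) (u t) := hcf'.clm_apply hu.continuous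
  have c2 : Continuous fun t => f t (deriv u t) := hf.continuous.clm_apply hcu'
  have hint : IntervalIntegrable (fun t => (deriv f t) (u t) + f t (deriv u t))
      MeasureTheory.volume t₀ t₁ := (c1.add c2).intervalIntegrable _ _
  have heq := intervalIntegral.integral_eq_sub_of_hasDerivAt key hint
  rw [h0, h1] at heq
  simp only [map_zero, sub_zero] at heq
  rw [intervalIntegral.integral_add (c1.intervalIntegrable _ _) (c2.intervalIntegrable _ _)] at heq
  linarith

lemma ibp (t₀ t₁ : ℝ) : ∀ (r : ℕ) (f : ℝ → E →L[ℝ] ℝ) (g : ℝ → E),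
    ContDiff ℝ (⊤:ℕ∞) f → ContDiff ℝ (⊤:ℕ∞) g →
    (∀ j < r, iteratedDeriv j g t₀ = 0 ∧ iteratedDeriv j g t₁ = 0) →
    ∫ t in t₀..t₁, f t (iteratedDeriv r g t)
      = (-1:ℝ)^r * ∫ t in t₀..t₁, (iteratedDeriv r f t) (g t)
  | 0, f, g, hf, hg, hbd => by simp
  | r+1, f, g, hf, hg, hbd => by
    have h1 : ∫ t in t₀..t₁, f t (iteratedDeriv (r+1) g t)
        = - ∫ t in t₀..t₁, (deriv f t) (iteratedDeriv r g t) := by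
      have := ibp_step hf (contDiff_iteratedDeriv' r hg) t₀ t₁
        (hbd r (Nat.lt_succ_self r)).1 (hbd r (Nat.lt_succ_self r)).2
      rw [← this]
      simp only [← iteratedDeriv_succ]
    have h2 := ibp t₀ t₁ r (deriv f) g
      ((contDiff_infty_iff_deriv.mp (by exact_mod_cast hf)).2) hg
      (fun j hj => hbd j (hj.trans (Nat.lt_succ_self r)))
    rw [h1, h2, ← iteratedDeriv_succ']
    ring



end FirstVariationHelpers

set_option maxHeartbeats 1000000 in
/-- **First variation formula for a higher-order Lagrangian (standard case).**
For smooth `L`, `q`, and a smooth variation `h` whose derivatives of orders `0,…,k-1`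
vanish at the endpoints, the function `s ↦ ∫_{t₀}^{t₁} L(jet_k(q + s•h)(t)) dt` has
derivative at `s = 0` equal to
`∫_{t₀}^{t₁} (∑_{r=0}^{k} (−1)^r D^r[t ↦ ∂_r L(jet_k q t)](t)) (h t) dt`. -/
theorem first_variation_formula (n k : ℕ) (hn : 1 ≤ n) (hk : 1 ≤ k)
    (t₀ t₁ : ℝ) (ht : t₀ < t₁)
    (L : (Fin (k + 1) → EuclideanSpace ℝ (Fin n)) → ℝ) (hL : ContDiff ℝ (⊤ : ℕ∞) L)
    (q h : ℝ → EuclideanSpace ℝ (Fin n))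
    (hq : ContDiff ℝ (⊤ : ℕ∞) q) (hh : ContDiff ℝ (⊤ : ℕ∞) h)
    (hbd : ∀ j < k, iteratedDeriv j h t₀ = 0 ∧ iteratedDeriv j h t₁ = 0) :
    HasDerivAt (fun s : ℝ => ∫ t in t₀..t₁, L (jet k (q + s • h) t))
      (∫ t in t₀..t₁,
        (∑ r ∈ Finset.range (k + 1),
          (-1 : ℝ) ^ r • iteratedDeriv r (fun u => pd L r (jet k q u)) t) (h t)) 0 := by
  have hjq := jet_smooth k hq
  have hjh := jet_smooth k hh
  have hLd : Differentiable ℝ L := hL.differentiable (by simp)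
  have hfd : ContDiff ℝ (⊤:ℕ∞) (fun A => fderiv ℝ L A) := hL.fderiv_right (mod_cast le_top)
  set F' : ℝ → ℝ → ℝ :=
    fun s t => fderiv ℝ L (jet k q t + s • jet k h t) (jet k h t) with hF'def
  have hcont : Continuous fun p : ℝ × ℝ =>
      fderiv ℝ L (jet k q p.2 + p.1 • jet k h p.2) (jet k h p.2) := by
    apply Continuous.clm_apply
    · exact hfd.continuous.comp ((hjq.continuous.comp continuous_snd).add
        (continuous_fst.smul (hjh.continuous.comp continuous_snd)))
    · exact hjh.continuous.comp continuous_snd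
  have hK : IsCompact (Set.Icc (-1:ℝ) 1 ×ˢ Set.uIcc t₀ t₁) :=
    (isCompact_Icc).prod isCompact_uIcc
  obtain ⟨C, hC⟩ := hK.exists_bound_of_continuousOn hcont.continuousOn
  have hFscont : ∀ s : ℝ, Continuous fun t => L (jet k q t + s • jet k h t) := fun s =>
    hL.continuous.comp (hjq.continuous.add (hjh.continuous.const_smul s))
  have main := intervalIntegral.hasDerivAt_integral_of_dominated_loc_of_deriv_le
    (μ := MeasureTheory.volume) (F := fun s t => L (jet k q t + s • jet k h t)) (F' := F')
    (x₀ := (0:ℝ)) (bound := fun _ => C) (a := t₀) (b := t₁) (s := Metric.ball (0:ℝ) 1) (Metric.ball_mem_nhds _ one_pos)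
    (Filter.Eventually.of_forall fun s => ((hFscont s).aestronglyMeasurable))
    (((hFscont 0).intervalIntegrable _ _))
    ((hcont.comp (continuous_const.prodMk continuous_id)).aestronglyMeasurable)
    (MeasureTheory.ae_of_all _ fun t ht s hs => by
      have hs1 : s ∈ Set.Icc (-1:ℝ) 1 := by
        rw [Metric.mem_ball, dist_zero_right, Real.norm_eq_abs] at hs
        constructor <;> [linarith [neg_abs_le s]; linarith [le_abs_self s]]
      have ht1 : t ∈ Set.uIcc t₀ t₁ := Set.uIoc_subset_uIcc ht
      exact hC (s, t) ⟨hs1, ht1⟩)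
    (intervalIntegrable_const)
    (MeasureTheory.ae_of_all _ fun t ht s hs => by
      have hline : HasDerivAt (fun s : ℝ => jet k q t + s • jet k h t) (jet k h t) s := by
        simpa using ((hasDerivAt_id s).smul_const (jet k h t)).const_add (jet k q t)
      exact (hLd _).hasFDerivAt.comp_hasDerivAt s hline)
  have hfun : (fun s : ℝ => ∫ t in t₀..t₁, L (jet k (q + s • h) t))
      = fun s => ∫ t in t₀..t₁, L (jet k q t + s • jet k h t) := by
    funext s
    apply intervalIntegral.integral_congr
    intro t _
    show L (jet k (q + s • h) t) = L (jet k q t + s • jet k h t)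
    rw [jet_add_smul k hq hh]
  have hpds : ∀ r ∈ Finset.range (k+1), ContDiff ℝ (⊤:ℕ∞) (fun u => pd L r (jet k q u)) :=
    fun r hr => pd_comp_smooth hL hq r (Finset.mem_range.mp hr)
  have s1 : (∫ t in t₀..t₁, F' 0 t)
      = ∫ t in t₀..t₁, ∑ r ∈ Finset.range (k+1),
          pd L r (jet k q t) (iteratedDeriv r h t) := by
    apply intervalIntegral.integral_congr
    intro t _
    simp only [hF'def, zero_smul, add_zero]
    exact fderiv_jet_apply L q h t
  have s2 : (∫ t in t₀..t₁, ∑ r ∈ Finset.range (k+1),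
          pd L r (jet k q t) (iteratedDeriv r h t))
      = ∑ r ∈ Finset.range (k+1), ∫ t in t₀..t₁,
          pd L r (jet k q t) (iteratedDeriv r h t) := by
    apply intervalIntegral.integral_finset_sum
    intro r hr
    exact (((hpds r hr).continuous).clm_apply
      (contDiff_iteratedDeriv' r hh).continuous).intervalIntegrable _ _
  have s3 : (∑ r ∈ Finset.range (k+1), ∫ t in t₀..t₁,
          pd L r (jet k q t) (iteratedDeriv r h t))
      = ∑ r ∈ Finset.range (k+1), (-1:ℝ)^r * ∫ t in t₀..t₁,
          (iteratedDeriv r (fun u => pd L r (jet k q u)) t) (h t) := by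
    refine Finset.sum_congr rfl fun r hr => ?_
    exact ibp t₀ t₁ r _ h (hpds r hr) hh
      (fun j hj => hbd j (lt_of_lt_of_le hj (Nat.lt_succ_iff.mp (Finset.mem_range.mp hr))))
  have s4 : (∑ r ∈ Finset.range (k+1), (-1:ℝ)^r * ∫ t in t₀..t₁,
          (iteratedDeriv r (fun u => pd L r (jet k q u)) t) (h t))
      = ∫ t in t₀..t₁, ∑ r ∈ Finset.range (k+1),
          (-1:ℝ)^r * (iteratedDeriv r (fun u => pd L r (jet k q u)) t) (h t) := by
    rw [Finset.sum_congr rfl fun (r : ℕ) (hr : r ∈ Finset.range (k+1)) =>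
      (intervalIntegral.integral_const_mul ((-1:ℝ)^r) _).symm]
    symm
    apply intervalIntegral.integral_finset_sum
    intro r hr
    exact ((((contDiff_iteratedDeriv' r (hpds r hr)).continuous).clm_apply
      hh.continuous).const_smul ((-1:ℝ)^r)).intervalIntegrable _ _
  have s5 : (∫ t in t₀..t₁, ∑ r ∈ Finset.range (k+1),
          (-1:ℝ)^r * (iteratedDeriv r (fun u => pd L r (jet k q u)) t) (h t))
      = ∫ t in t₀..t₁,
          (∑ r ∈ Finset.range (k + 1),
            (-1 : ℝ) ^ r • iteratedDeriv r (fun u => pd L r (jet k q u)) t) (h t) := by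
    apply intervalIntegral.integral_congr
    intro t _
    simp only [ContinuousLinearMap.sum_apply, ContinuousLinearMap.smul_apply, smul_eq_mul]
  rw [hfun, ← (((s1.trans s2).trans s3).trans (s4.trans s5))]
  exact main.2
end
end

section
/- (Higher-order Euler–Poincaré equations characterize critical points.) Let k ≥ 1, t₀ < t₁, let L : (Fin k → 𝔤) → ℝ be smooth, and let ξ : ℝ → 𝔤 be smooth with momentum π. Then the following are equivalent: (a) for every variation direction σ of order k on [t₀,t₁], ∫_{t₀}^{t₁} ∑_{r=1}^{k} ∂_rL(Jξ(t))( (δ_σξ)^{(r−1)}(t) ) dt = 0, where δ_σξ := σ' + [ξ, σ]; (b) ξ satisfies the higher-order Euler–Poincaré equations for L on [t₀,t₁]: π'(t)(η) = π(t)([ξ(t), η]) for all t ∈ [t₀,t₁] and all η ∈ 𝔤. -/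
noncomputable section

/-- The reduced `k`-jet of a curve: slot `i` (Lean indexing `0,…,k-1`, i.e. the paper's
slot `r = i+1`) holds the `i`-th derivative. -/
def rjet {E : Type*} [NormedAddCommGroup E] [NormedSpace ℝ E] (k : ℕ) (q : ℝ → E) (t : ℝ) :
    Fin k → E := fun i => iteratedDeriv i q t

open intervalIntegral MeasureTheory

section Infra
variable {F : Type*} [NormedAddCommGroup F] [NormedSpace ℝ F]
variable {G : Type*} [NormedAddCommGroup G] [NormedSpace ℝ G]

lemma my_smooth_itd {f : ℝ → F} (hf : ContDiff ℝ (⊤:ℕ∞) f) (n : ℕ) :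
    ContDiff ℝ (⊤:ℕ∞) (iteratedDeriv n f) := by
  rw [iteratedDeriv_eq_iterate]; exact ContDiff.iterate_deriv n hf

lemma my_smooth_deriv {f : ℝ → F} (hf : ContDiff ℝ (⊤:ℕ∞) f) :
    ContDiff ℝ (⊤:ℕ∞) (deriv f) := (contDiff_infty_iff_deriv.mp hf).2

lemma my_itd_add {f g : ℝ → F} (hf : ContDiff ℝ (⊤:ℕ∞) f) (hg : ContDiff ℝ (⊤:ℕ∞) g)
    (n : ℕ) (x : ℝ) :
    iteratedDeriv n (fun u => f u + g u) x = iteratedDeriv n f x + iteratedDeriv n g x := by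
  simp only [iteratedDeriv_eq_iteratedFDeriv]
  rw [show (fun u => f u + g u) = f + g from rfl,
    iteratedFDeriv_add_apply (hf.of_le (by exact_mod_cast le_top)).contDiffAt
      (hg.of_le (by exact_mod_cast le_top)).contDiffAt]
  rfl

/-- derivative of `t ↦ c t (g t)` for a CLM-valued `c`. -/
lemma my_deriv_clm_apply {c : ℝ → F →L[ℝ] G} {g : ℝ → F}
    (hc : ContDiff ℝ (⊤:ℕ∞) c) (hg : ContDiff ℝ (⊤:ℕ∞) g) :
    deriv (fun t => c t (g t)) = fun t => deriv c t (g t) + c t (deriv g t) := by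
  funext t
  exact (((hc.differentiable (by simp)) t).hasDerivAt.clm_apply
    ((hg.differentiable (by simp)) t).hasDerivAt).deriv

lemma my_smooth_clm_apply {c : ℝ → F →L[ℝ] G} {g : ℝ → F}
    (hc : ContDiff ℝ (⊤:ℕ∞) c) (hg : ContDiff ℝ (⊤:ℕ∞) g) :
    ContDiff ℝ (⊤:ℕ∞) (fun t => c t (g t)) := hc.clm_apply hg

/-- If all iterated derivatives of `g` up to order `j` vanish at `x`, then the `j`-th
iterated derivative of `t ↦ c t (g t)` vanishes at `x`. -/
lemma my_clm_apply_vanish (x : ℝ) : ∀ (j : ℕ) (c : ℝ → F →L[ℝ] G) (g : ℝ → F),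
    ContDiff ℝ (⊤:ℕ∞) c → ContDiff ℝ (⊤:ℕ∞) g → (∀ m ≤ j, iteratedDeriv m g x = 0) →
    iteratedDeriv j (fun t => c t (g t)) x = 0 := by
  intro j
  induction j with
  | zero =>
    intro c g hc hg h
    have h0 : g x = 0 := by simpa using h 0 (le_refl 0)
    simp [h0]
  | succ j ih =>
    intro c g hc hg h
    rw [iteratedDeriv_succ', my_deriv_clm_apply hc hg]
    rw [my_itd_add (my_smooth_clm_apply (my_smooth_deriv hc) hg)
      (my_smooth_clm_apply hc (my_smooth_deriv hg))]
    rw [ih _ _ (my_smooth_deriv hc) hg (fun m hm => h m (hm.trans (Nat.le_succ j))),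
      ih _ _ hc (my_smooth_deriv hg) (fun m hm => by
        rw [← iteratedDeriv_succ']; exact h (m+1) (Nat.succ_le_succ hm))]
    simp

lemma my_cont_clm_apply {c : ℝ → F →L[ℝ] G} {g : ℝ → F}
    (hc : Continuous c) (hg : Continuous g) : Continuous (fun t => c t (g t)) :=
  isBoundedBilinearMap_apply.continuous.comp (hc.prodMk hg)

/-- single integration by parts -/
lemma my_ibp {t₀ t₁ : ℝ} {A : ℝ → F →L[ℝ] ℝ} {g : ℝ → F}
    (hA : ContDiff ℝ (⊤:ℕ∞) A) (hg : ContDiff ℝ (⊤:ℕ∞) g) :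
    ∫ t in t₀..t₁, (deriv A t (g t) + A t (deriv g t)) = A t₁ (g t₁) - A t₀ (g t₀) := by
  apply intervalIntegral.integral_eq_sub_of_hasDerivAt
    (f := fun t => A t (g t))
  · intro x _
    exact ((hA.differentiable (by simp) x).hasDerivAt.clm_apply
      (hg.differentiable (by simp) x).hasDerivAt)
  · apply Continuous.intervalIntegrable
    exact (my_cont_clm_apply ((my_smooth_deriv hA).continuous) hg.continuous).add
      (my_cont_clm_apply hA.continuous (my_smooth_deriv hg).continuous)

/-- iterated integration by parts -/
lemma my_ibp_iter {t₀ t₁ : ℝ} : ∀ (i : ℕ) (A : ℝ → F →L[ℝ] ℝ), ContDiff ℝ (⊤:ℕ∞) A →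
    ∀ (g : ℝ → F), ContDiff ℝ (⊤:ℕ∞) g →
    (∀ j < i, iteratedDeriv j g t₀ = 0 ∧ iteratedDeriv j g t₁ = 0) →
    ∫ t in t₀..t₁, A t (iteratedDeriv i g t)
      = ∫ t in t₀..t₁, (-1:ℝ)^i * (iteratedDeriv i A t (g t)) := by
  intro i
  induction i with
  | zero => intro A hA g hg _; simp
  | succ i ih =>
    intro A hA g hg hbd
    set Gi := iteratedDeriv i g with hGi
    have hGis : ContDiff ℝ (⊤:ℕ∞) Gi := my_smooth_itd hg i
    have key := my_ibp (t₀ := t₀) (t₁ := t₁) hA hGis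
    rw [show Gi t₀ = 0 from (hbd i (Nat.lt_succ_self i)).1,
      show Gi t₁ = 0 from (hbd i (Nat.lt_succ_self i)).2] at key
    simp only [map_zero, sub_zero] at key
    have hsplit : ∫ t in t₀..t₁, (deriv A t (Gi t) + A t (deriv Gi t))
        = (∫ t in t₀..t₁, deriv A t (Gi t)) + ∫ t in t₀..t₁, A t (deriv Gi t) := by
      apply intervalIntegral.integral_add
      · exact (my_cont_clm_apply (my_smooth_deriv hA).continuous hGis.continuous).intervalIntegrable _ _
      · exact (my_cont_clm_apply hA.continuous (my_smooth_deriv hGis).continuous).intervalIntegrable _ _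
    have h1 : ∫ t in t₀..t₁, A t (iteratedDeriv (i+1) g t)
        = - ∫ t in t₀..t₁, deriv A t (iteratedDeriv i g t) := by
      rw [iteratedDeriv_succ]
      rw [hsplit] at key
      linarith [key]
    rw [h1, ih (deriv A) (my_smooth_deriv hA) g hg
      (fun j hj => hbd j (hj.trans (Nat.lt_succ_self i)))]
    rw [← intervalIntegral.integral_neg]
    congr 1; funext t
    rw [← iteratedDeriv_succ']
    ring

open Filter Topology in
lemma my_itd_eventually_zero {f : ℝ → F} {x : ℝ} (h : f =ᶠ[nhds x] 0) (j : ℕ) :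
    iteratedDeriv j f x = 0 := by
  rw [Filter.EventuallyEq.iteratedDeriv_eq j h, iteratedDeriv_eq_iterate,
    Function.iterate_fixed (show deriv (0:ℝ → F) = 0 by
      funext y; exact deriv_const y 0) j]
  rfl

/-- Fundamental lemma of the calculus of variations (scalar pairing form):
a continuous `Φ : ℝ → F →L[ℝ] ℝ` that kills all smooth `σ` supported away from the
endpoints vanishes on `[t₀,t₁]`. -/
lemma my_fundamental {t₀ t₁ : ℝ} (ht : t₀ < t₁) {Φ : ℝ → F →L[ℝ] ℝ}
    (hΦ : Continuous Φ)
    (hcrit : ∀ σ : ℝ → F, ContDiff ℝ (⊤:ℕ∞) σ →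
      (σ =ᶠ[nhds t₀] 0) → (σ =ᶠ[nhds t₁] 0) →
      (∫ t in t₀..t₁, Φ t (σ t)) = 0) :
    ∀ t ∈ Set.Icc t₀ t₁, Φ t = 0 := by
  -- first on the open interval
  have hIoo : ∀ s ∈ Set.Ioo t₀ t₁, Φ s = 0 := by
    intro s hs
    ext η
    by_contra hne
    set r : ℝ := Φ s η with hr
    have hrne : r ≠ 0 := by simpa using hne
    -- continuity of t ↦ Φ t η
    have hφc : Continuous (fun t => Φ t η) := my_cont_clm_apply hΦ continuous_const
    have h2 : ∀ᶠ t in nhds s, |Φ t η - r| < |r| / 2 := by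
      have := hφc.continuousAt (x := s)
      have : ∀ᶠ t in nhds s, Φ t η ∈ Set.Ioo (r - |r|/2) (r + |r|/2) := by
        apply hφc.continuousAt.preimage_mem_nhds
        apply Ioo_mem_nhds <;> [linarith [abs_pos.mpr hrne]; linarith [abs_pos.mpr hrne]]
      exact this.mono (fun t htm => abs_sub_lt_iff.mpr ⟨by linarith [htm.2], by linarith [htm.1]⟩)
    obtain ⟨δ, hδ0, hδ⟩ := Metric.eventually_nhds_iff_ball.mp h2
    set ε : ℝ := min δ (min (s - t₀) (t₁ - s)) with hε
    have hε0 : 0 < ε := by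
      simp only [hε, lt_min_iff]
      exact ⟨hδ0, by linarith [hs.1], by linarith [hs.2]⟩
    -- bump function
    set b : ContDiffBump s := ⟨ε/4, ε/2, by linarith, by linarith⟩ with hb
    set σ : ℝ → F := fun t => b t • η with hσ
    have hσs : ContDiff ℝ (⊤:ℕ∞) σ := (b.contDiff (n := ⊤)).smul contDiff_const
    have hsupp : ∀ t, t ∉ Metric.ball s (ε/2) → σ t = 0 := by
      intro t htm
      have : b t = 0 := by
        by_contra hb0
        exact htm (by simpa [b.support_eq] using Function.mem_support.mpr hb0)
      simp [hσ, this]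
    have hev0 : σ =ᶠ[nhds t₀] 0 := by
      have : Set.Iio (s - ε/2) ∈ nhds t₀ := Iio_mem_nhds (by
        have : ε ≤ s - t₀ := (min_le_right _ _).trans (min_le_left _ _)
        linarith)
      filter_upwards [this] with t htm
      refine hsupp t (fun hx => ?_)
      rw [Metric.mem_ball, Real.dist_eq] at hx
      have := abs_lt.mp hx
      simp only [Set.mem_Iio] at htm; linarith [this.1]
    have hev1 : σ =ᶠ[nhds t₁] 0 := by
      have : Set.Ioi (s + ε/2) ∈ nhds t₁ := Ioi_mem_nhds (by
        have : ε ≤ t₁ - s := (min_le_right _ _).trans (min_le_right _ _)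
        linarith)
      filter_upwards [this] with t htm
      refine hsupp t (fun hx => ?_)
      rw [Metric.mem_ball, Real.dist_eq] at hx
      have := abs_lt.mp hx
      simp only [Set.mem_Ioi] at htm; linarith [this.2]
    have h0 := hcrit σ hσs hev0 hev1
    -- multiply by r and derive positivity
    have hpos : 0 < ∫ t in t₀..t₁, r * Φ t (σ t) := by
      apply intervalIntegral.integral_pos ht
      · exact (continuous_const.mul (my_cont_clm_apply hΦ hσs.continuous)).continuousOn
      · intro x hx
        by_cases hxb : x ∈ Metric.ball s (ε/2)
        · have hball : x ∈ Metric.ball s δ :=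
            Metric.ball_subset_ball (by
              have : ε ≤ δ := min_le_left _ _
              linarith) hxb
          have habs := hδ x hball
          have : r * Φ x η > 0 := by
            rcases abs_sub_lt_iff.mp habs with ⟨ha, hb'⟩
            rcases lt_or_gt_of_ne hrne with hneg | hposr
            · have : |r| = -r := abs_of_neg hneg
              nlinarith
            · have : |r| = r := abs_of_pos hposr
              nlinarith
          have : Φ x (σ x) = b x * Φ x η := by
            simp [hσ, smul_eq_mul]
          rw [this]
          have hbnn : 0 ≤ b x := b.nonneg
          nlinarith
        · rw [hsupp x hxb]; simp
      · refine ⟨s, ⟨hs.1.le, hs.2.le⟩, ?_⟩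
        have hbs : b s = 1 := b.one_of_mem_closedBall (by simp [Metric.mem_closedBall]; positivity)
        have : Φ s (σ s) = b s * Φ s η := by simp [hσ, smul_eq_mul]
        rw [this, hbs]
        simp only [one_mul]
        rcases lt_or_gt_of_ne hrne with hneg | hposr
        · nlinarith
        · nlinarith
    rw [intervalIntegral.integral_const_mul, h0, mul_zero] at hpos
    exact lt_irrefl _ hpos
  -- extend to closed interval by continuity
  intro t htI
  have hclos : Set.EqOn Φ 0 (closure (Set.Ioo t₀ t₁)) :=
    (Set.EqOn.closure (fun s hs => hIoo s hs) hΦ continuous_const)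
  have : t ∈ closure (Set.Ioo t₀ t₁) := by
    rw [closure_Ioo ht.ne]; exact htI
  exact hclos this

end Infra

/-- **Higher-order Euler–Poincaré equations characterize critical points.**
The Lie algebra `𝔤` is modeled as a finite-dimensional real normed space together with a
bilinear bracket `bra` which is skew-symmetric and satisfies the Jacobi identity.
A smooth curve `ξ` with momentum `π` annihilates the first variation for all variation
directions `σ` of order `k` on `[t₀,t₁]` (with `δ_σξ = σ' + [ξ,σ]`) if and only if it
satisfies the higher-order Euler–Poincaré equations `π'(t)(η) = π(t)([ξ t, η])` on `[t₀,t₁]`. -/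
theorem higher_order_euler_poincare_iff_critical {𝔤 : Type*} [NormedAddCommGroup 𝔤]
    [NormedSpace ℝ 𝔤] [FiniteDimensional ℝ 𝔤]
    (bra : 𝔤 →ₗ[ℝ] 𝔤 →ₗ[ℝ] 𝔤)
    (hskew : ∀ x y : 𝔤, bra x y = - bra y x)
    (hjac : ∀ x y z : 𝔤, bra x (bra y z) + bra y (bra z x) + bra z (bra x y) = 0)
    (k : ℕ) (hk : 1 ≤ k) (t₀ t₁ : ℝ) (ht : t₀ < t₁)
    (L : (Fin k → 𝔤) → ℝ) (hL : ContDiff ℝ (⊤ : ℕ∞) L)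
    (ξ : ℝ → 𝔤) (hξ : ContDiff ℝ (⊤ : ℕ∞) ξ)
    (π : ℝ → 𝔤 →L[ℝ] ℝ)
    (hπ : π = fun t => ∑ i ∈ Finset.range k,
        (-1 : ℝ) ^ i • iteratedDeriv i (fun s => pd L i (rjet k ξ s)) t) :
    (∀ σ : ℝ → 𝔤, ContDiff ℝ (⊤ : ℕ∞) σ →
        (∀ j < k, iteratedDeriv j σ t₀ = 0 ∧ iteratedDeriv j σ t₁ = 0) →
        (∫ t in t₀..t₁, ∑ i ∈ Finset.range k,
          pd L i (rjet k ξ t)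
            (iteratedDeriv i (fun u => deriv σ u + bra (ξ u) (σ u)) t)) = 0) ↔
      ∀ t ∈ Set.Icc t₀ t₁, ∀ η : 𝔤, deriv π t η = π t (bra (ξ t) η) := by

  classical
  -- continuous bilinear bracket
  set braL : 𝔤 →L[ℝ] 𝔤 →L[ℝ] 𝔤 :=
    LinearMap.toContinuousLinearMap
      (((LinearMap.toContinuousLinearMap :
          (𝔤 →ₗ[ℝ] 𝔤) ≃ₗ[ℝ] (𝔤 →L[ℝ] 𝔤)) : (𝔤 →ₗ[ℝ] 𝔤) →ₗ[ℝ] (𝔤 →L[ℝ] 𝔤)).comp bra)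
    with hbraLdef
  have hbraL : ∀ x y : 𝔤, braL x y = bra x y := by
    intro x y
    simp [hbraLdef]
  -- smoothness of the slot derivatives along the jet
  have hrjet : ContDiff ℝ (⊤:ℕ∞) (rjet k ξ) :=
    contDiff_pi.2 fun i => my_smooth_itd hξ i
  have hpd : ∀ i : ℕ, ContDiff ℝ (⊤:ℕ∞) (fun A => pd L i A) := by
    intro i
    by_cases h : i < k
    · simp only [pd, dif_pos h]
      exact (hL.fderiv_right (by exact_mod_cast le_top)).clm_comp contDiff_const
    · simp only [pd, dif_neg h]
      exact contDiff_const
  set Fi : ℕ → ℝ → 𝔤 →L[ℝ] ℝ := fun i t => pd L i (rjet k ξ t) with hFidef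
  have hFi : ∀ i, ContDiff ℝ (⊤:ℕ∞) (Fi i) := fun i => (hpd i).comp hrjet
  have hπs : ContDiff ℝ (⊤:ℕ∞) π := by
    rw [hπ]
    exact ContDiff.sum fun i _ => (my_smooth_itd (hFi i) i).const_smul _
  have hbξ : ContDiff ℝ (⊤:ℕ∞) (fun u => braL (ξ u)) := braL.contDiff.comp hξ
  -- the key reduction of the first variation
  have key : ∀ σ : ℝ → 𝔤, ContDiff ℝ (⊤ : ℕ∞) σ →
      (∀ j < k, iteratedDeriv j σ t₀ = 0 ∧ iteratedDeriv j σ t₁ = 0) →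
      (∫ t in t₀..t₁, ∑ i ∈ Finset.range k,
          pd L i (rjet k ξ t)
            (iteratedDeriv i (fun u => deriv σ u + bra (ξ u) (σ u)) t))
        = ∫ t in t₀..t₁, (π t (braL (ξ t) (σ t)) - deriv π t (σ t)) := by
    intro σ hσ hbd
    set δ : ℝ → 𝔤 := fun u => deriv σ u + braL (ξ u) (σ u) with hδdef
    have hδeq : (fun u => deriv σ u + bra (ξ u) (σ u)) = δ := by
      funext u; exact congrArg (deriv σ u + ·) (hbraL (ξ u) (σ u)).symm
    have hB : ContDiff ℝ (⊤:ℕ∞) (fun u => braL (ξ u) (σ u)) := hbξ.clm_apply hσ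
    have hδs : ContDiff ℝ (⊤:ℕ∞) δ := (my_smooth_deriv hσ).add hB
    have hδvan : ∀ j, j + 1 < k → (iteratedDeriv j δ t₀ = 0 ∧ iteratedDeriv j δ t₁ = 0) := by
      intro j hj
      constructor
      · rw [hδdef, my_itd_add (my_smooth_deriv hσ) hB, ← iteratedDeriv_succ',
          my_clm_apply_vanish _ j _ _ hbξ hσ (fun m hm => (hbd m (by omega)).1),
          (hbd (j+1) hj).1]
        simp
      · rw [hδdef, my_itd_add (my_smooth_deriv hσ) hB, ← iteratedDeriv_succ',
          my_clm_apply_vanish _ j _ _ hbξ hσ (fun m hm => (hbd m (by omega)).2),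
          (hbd (j+1) hj).2]
        simp
    -- continuity facts
    have hDδc : ∀ i : ℕ, Continuous (iteratedDeriv i δ) := fun i => (my_smooth_itd hδs i).continuous
    have hσ0 : σ t₀ = 0 := by have h := (hbd 0 hk).1; rwa [iteratedDeriv_zero] at h
    have hσ1 : σ t₁ = 0 := by have h := (hbd 0 hk).2; rwa [iteratedDeriv_zero] at h
    rw [hδeq]
    have step1 : (∫ t in t₀..t₁, ∑ i ∈ Finset.range k, Fi i t (iteratedDeriv i δ t))
        = ∑ i ∈ Finset.range k, ∫ t in t₀..t₁, Fi i t (iteratedDeriv i δ t) :=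
      intervalIntegral.integral_finset_sum (fun i _ =>
        (my_cont_clm_apply (hFi i).continuous (hDδc i)).intervalIntegrable _ _)
    have step2 : ∀ i ∈ Finset.range k,
        (∫ t in t₀..t₁, Fi i t (iteratedDeriv i δ t))
          = ∫ t in t₀..t₁, (-1:ℝ)^i * (iteratedDeriv i (Fi i) t (δ t)) := by
      intro i hi
      rw [Finset.mem_range] at hi
      exact my_ibp_iter i (Fi i) (hFi i) δ hδs (fun j hj => hδvan j (by omega))
    have step3 : ∑ i ∈ Finset.range k, (∫ t in t₀..t₁, (-1:ℝ)^i * (iteratedDeriv i (Fi i) t (δ t)))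
        = ∫ t in t₀..t₁, ∑ i ∈ Finset.range k, (-1:ℝ)^i * (iteratedDeriv i (Fi i) t (δ t)) :=
      (intervalIntegral.integral_finset_sum (fun i _ =>
        ((continuous_const.mul (my_cont_clm_apply (my_smooth_itd (hFi i) i).continuous
          hδs.continuous))).intervalIntegrable _ _)).symm
    have step4 : ∀ t : ℝ, ∑ i ∈ Finset.range k, (-1:ℝ)^i * (iteratedDeriv i (Fi i) t (δ t))
        = π t (δ t) := by
      intro t
      rw [hπ]
      simp only [ContinuousLinearMap.sum_apply, ContinuousLinearMap.smul_apply, smul_eq_mul]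
      rfl
    -- integration by parts for the π (deriv σ) term
    have hibp := my_ibp (t₀ := t₀) (t₁ := t₁) hπs hσ
    rw [show σ t₀ = 0 from hσ0, show σ t₁ = 0 from hσ1] at hibp
    simp only [map_zero, sub_zero] at hibp
    have hAc : Continuous (fun t => deriv π t (σ t)) :=
      my_cont_clm_apply (my_smooth_deriv hπs).continuous hσ.continuous
    have hBc : Continuous (fun t => π t (deriv σ t)) :=
      my_cont_clm_apply hπs.continuous (my_smooth_deriv hσ).continuous
    have hCc : Continuous (fun t => π t (braL (ξ t) (σ t))) :=
      my_cont_clm_apply hπs.continuous hB.continuous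
    have hsplit1 : (∫ t in t₀..t₁, (deriv π t (σ t) + π t (deriv σ t)))
        = (∫ t in t₀..t₁, deriv π t (σ t)) + ∫ t in t₀..t₁, π t (deriv σ t) :=
      intervalIntegral.integral_add (hAc.intervalIntegrable _ _) (hBc.intervalIntegrable _ _)
    have hsplit2 : (∫ t in t₀..t₁, π t (δ t))
        = (∫ t in t₀..t₁, π t (deriv σ t)) + ∫ t in t₀..t₁, π t (braL (ξ t) (σ t)) := by
      rw [show (fun t => π t (δ t)) = fun t => (π t (deriv σ t) + π t (braL (ξ t) (σ t))) by
        funext t; rw [hδdef]; exact map_add _ _ _]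
      exact intervalIntegral.integral_add (hBc.intervalIntegrable _ _) (hCc.intervalIntegrable _ _)
    have hsplit3 : (∫ t in t₀..t₁, (π t (braL (ξ t) (σ t)) - deriv π t (σ t)))
        = (∫ t in t₀..t₁, π t (braL (ξ t) (σ t))) - ∫ t in t₀..t₁, deriv π t (σ t) :=
      intervalIntegral.integral_sub (hCc.intervalIntegrable _ _) (hAc.intervalIntegrable _ _)
    calc (∫ t in t₀..t₁, ∑ i ∈ Finset.range k, Fi i t (iteratedDeriv i δ t))
        = ∑ i ∈ Finset.range k, ∫ t in t₀..t₁, Fi i t (iteratedDeriv i δ t) := step1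
      _ = ∑ i ∈ Finset.range k, ∫ t in t₀..t₁, (-1:ℝ)^i * (iteratedDeriv i (Fi i) t (δ t)) :=
          Finset.sum_congr rfl step2
      _ = ∫ t in t₀..t₁, ∑ i ∈ Finset.range k, (-1:ℝ)^i * (iteratedDeriv i (Fi i) t (δ t)) := step3
      _ = ∫ t in t₀..t₁, π t (δ t) := by
          apply intervalIntegral.integral_congr; intro t _; exact step4 t
      _ = ∫ t in t₀..t₁, (π t (braL (ξ t) (σ t)) - deriv π t (σ t)) := by
          rw [hsplit2, hsplit3]
          rw [hsplit1] at hibp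
          linarith
  constructor
  · -- criticality implies Euler–Poincaré
    intro hcrit t htI η
    set Φ : ℝ → 𝔤 →L[ℝ] ℝ := fun t => ((π t).comp (braL (ξ t))) - deriv π t with hΦdef
    have hΦc : Continuous Φ :=
      (Continuous.clm_comp hπs.continuous hbξ.continuous).sub (my_smooth_deriv hπs).continuous
    have hzero : Φ t = 0 := by
      refine my_fundamental ht hΦc ?_ t htI
      intro σ hσs hev0 hev1
      have hbd : ∀ j < k, iteratedDeriv j σ t₀ = 0 ∧ iteratedDeriv j σ t₁ = 0 :=
        fun j _ => ⟨my_itd_eventually_zero hev0 j, my_itd_eventually_zero hev1 j⟩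
      have h0 := hcrit σ hσs hbd
      have hk2 := key σ hσs hbd
      have : (∫ s in t₀..t₁, Φ s (σ s))
          = ∫ s in t₀..t₁, (π s (braL (ξ s) (σ s)) - deriv π s (σ s)) := by
        apply intervalIntegral.integral_congr; intro s _
        simp [hΦdef]
      rw [this, ← hk2, h0]
    have h := congrArg (fun T : 𝔤 →L[ℝ] ℝ => T η) hzero
    simp only [hΦdef, ContinuousLinearMap.sub_apply, ContinuousLinearMap.comp_apply,
      ContinuousLinearMap.zero_apply] at h
    rw [hbraL] at h
    linarith
  · -- Euler–Poincaré implies criticality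
    intro hEP σ hσs hbd
    rw [key σ hσs hbd]
    rw [intervalIntegral.integral_congr (g := fun _ => (0:ℝ)) (fun s hs => by
      rw [Set.uIcc_of_le ht.le] at hs
      have h := hEP s hs (σ s)
      simp only
      rw [hbraL]
      linarith)]
    simp
end
end

section
/- (Noether's theorem, Lie algebra case.) Let k ≥ 1, t₀ < t₁, let L : (Fin k → 𝔤) → ℝ be smooth, and let η ∈ 𝔤 be an infinitesimal symmetry of L, i.e. ∑_{r=1}^{k} ∂_rL(A)([A_r, η]) = 0 for every A ∈ (Fin k → 𝔤). Let ξ : ℝ → 𝔤 be smooth and satisfy the higher-order Euler–Poincaré equations for L on [t₀,t₁]. Define the momenta p^r(t) := ∑_{j=r}^{k−1} (−1)^{j−r} · D^{j−r}[s ↦ ∂_{j+1}L(Jξ(s))](t) ∈ 𝔤* for 0 ≤ r ≤ k−1 (so p^0 = π), and the momentum function G(t) := p^0(t)(η) + ∑_{r=1}^{k−1} p^r(t)([ξ^{(r−1)}(t), η]). Then G is constant on [t₀, t₁]. -/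
noncomputable section

/-- **Noether's theorem, Lie algebra case.**
The Lie algebra `𝔤` is modeled as a finite-dimensional real normed space with a bilinear,
skew-symmetric bracket `bra` satisfying the Jacobi identity.  If `η ∈ 𝔤` is an infinitesimal
symmetry of the smooth Lagrangian `L` (i.e. `∑_{r=1}^{k} ∂_r L(A)([A_r, η]) = 0` for all `A`)
and the smooth curve `ξ` satisfies the higher-order Euler–Poincaré equations on `[t₀,t₁]`,
then the momentum function
`G(t) = p⁰(t)(η) + ∑_{r=1}^{k-1} pʳ(t)([ξ^{(r-1)} t, η])` is constant on `[t₀,t₁]`,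
where `pʳ(t) = ∑_{j=r}^{k-1} (−1)^{j-r} D^{j-r}[s ↦ ∂_{j+1}L(Jξ s)](t)`. -/
theorem noether_lie_algebra {𝔤 : Type*} [NormedAddCommGroup 𝔤] [NormedSpace ℝ 𝔤]
    [FiniteDimensional ℝ 𝔤]
    (bra : 𝔤 →ₗ[ℝ] 𝔤 →ₗ[ℝ] 𝔤)
    (hskew : ∀ x y : 𝔤, bra x y = - bra y x)
    (hjac : ∀ x y z : 𝔤, bra x (bra y z) + bra y (bra z x) + bra z (bra x y) = 0)
    (k : ℕ) (hk : 1 ≤ k) (t₀ t₁ : ℝ) (ht : t₀ < t₁)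
    (L : (Fin k → 𝔤) → ℝ) (hL : ContDiff ℝ (⊤ : ℕ∞) L)
    (η : 𝔤)
    (hsym : ∀ A : Fin k → 𝔤, (∑ i : Fin k, pd L i A (bra (A i) η)) = 0)
    (ξ : ℝ → 𝔤) (hξ : ContDiff ℝ (⊤ : ℕ∞) ξ)
    (π : ℝ → 𝔤 →L[ℝ] ℝ)
    (hπ : π = fun t => ∑ i ∈ Finset.range k,
        (-1 : ℝ) ^ i • iteratedDeriv i (fun s => pd L i (rjet k ξ s)) t)
    (hEP : ∀ t ∈ Set.Icc t₀ t₁, ∀ ζ : 𝔤, deriv π t ζ = π t (bra (ξ t) ζ))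
    (p : ℕ → ℝ → 𝔤 →L[ℝ] ℝ)
    (hp : ∀ r, p r = fun t => ∑ j ∈ Finset.Icc r (k - 1),
        (-1 : ℝ) ^ (j - r) • iteratedDeriv (j - r) (fun s => pd L j (rjet k ξ s)) t)
    (G : ℝ → ℝ)
    (hG : G = fun t => p 0 t η +
        ∑ r ∈ Finset.Icc 1 (k - 1), p r t (bra (iteratedDeriv (r - 1) ξ t) η)) :
    ∀ s ∈ Set.Icc t₀ t₁, ∀ t ∈ Set.Icc t₀ t₁, G s = G t := by
  classical
  set f : ℕ → ℝ → 𝔤 →L[ℝ] ℝ := fun j s => pd L j (rjet k ξ s) with hf_def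
  have htop : (1 : WithTop ℕ∞) ≤ ((⊤ : ℕ∞) : WithTop ℕ∞) := by exact_mod_cast le_top
  have htop' : ((⊤ : ℕ∞) : WithTop ℕ∞) + 1 ≤ ((⊤ : ℕ∞) : WithTop ℕ∞) := by
    exact_mod_cast le_top
  -- smoothness of the jet
  have hrjet : ContDiff ℝ (⊤ : ℕ∞) (rjet k ξ) := by
    rw [contDiff_pi]
    intro i
    have : ContDiff ℝ (⊤ : ℕ∞) (iteratedDeriv i ξ) := by
      simpa [iteratedDeriv_eq_iterate] using hξ.iterate_deriv i
    simpa [rjet] using this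
  -- smoothness of the integrands
  have hfj : ∀ j, ContDiff ℝ (⊤ : ℕ∞) (f j) := by
    intro j
    have hpdc : ContDiff ℝ (⊤ : ℕ∞) (fun A : Fin k → 𝔤 => pd L j A) := by
      unfold pd
      by_cases h : j < k
      · simp only [dif_pos h]
        exact (hL.fderiv_right htop').clm_comp contDiff_const
      · simp only [dif_neg h]
        exact contDiff_const
    exact hpdc.comp hrjet
  -- derivatives of the iterated derivatives of the integrands
  have hD : ∀ j n t, HasDerivAt (iteratedDeriv n (f j)) (iteratedDeriv (n + 1) (f j) t) t := by
    intro j n t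
    have h1 : ContDiff ℝ (⊤ : ℕ∞) (iteratedDeriv n (f j)) := by
      simpa [iteratedDeriv_eq_iterate] using (hfj j).iterate_deriv n
    rw [iteratedDeriv_succ]
    exact ((h1.differentiable (by simp)) t).hasDerivAt
  -- derivative of each momentum
  have hpderiv : ∀ r t, HasDerivAt (p r)
      (∑ j ∈ Finset.Icc r (k - 1),
        (-1 : ℝ) ^ (j - r) • iteratedDeriv (j - r + 1) (f j) t) t := by
    intro r t
    rw [hp r]
    exact HasDerivAt.fun_sum fun j _ => (hD j (j - r) t).fun_const_smul _
  have hpval : ∀ r t, p r t = ∑ j ∈ Finset.Icc r (k - 1),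
      (-1 : ℝ) ^ (j - r) • iteratedDeriv (j - r) (f j) t := by
    intro r t
    rw [hp r]
  have hpk1 : ∀ t, p (k - 1) t = f (k - 1) t := by
    intro t
    rw [hpval]
    simp [Finset.Icc_self]
  -- the recursion for the momenta
  have hstep : ∀ r, 1 ≤ r → ∀ t, HasDerivAt (p r) (f (r - 1) t - p (r - 1) t) t := by
    intro r hr t
    convert hpderiv r t using 1
    rw [hpval (r - 1) t]
    by_cases hrk : r - 1 ≤ k - 1
    · have hins : Finset.Icc (r - 1) (k - 1) = insert (r - 1) (Finset.Icc r (k - 1)) := by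
        ext j; simp only [Finset.mem_Icc, Finset.mem_insert]; omega
      rw [hins, Finset.sum_insert (by simp only [Finset.mem_Icc]; omega)]
      simp only [Nat.sub_self, pow_zero, one_smul, iteratedDeriv_zero]
      have hcong : ∀ j ∈ Finset.Icc r (k - 1),
          (-1 : ℝ) ^ (j - (r - 1)) • iteratedDeriv (j - (r - 1)) (f j) t
            = -((-1 : ℝ) ^ (j - r) • iteratedDeriv (j - r + 1) (f j) t) := by
        intro j hj
        have hrj : r ≤ j := (Finset.mem_Icc.mp hj).1
        have h1 : j - (r - 1) = j - r + 1 := by omega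
        rw [h1, pow_succ, mul_comm, neg_one_mul]; exact neg_smul ((-1 : ℝ) ^ (j - r)) (iteratedDeriv (j - r + 1) (f j) t)
      rw [Finset.sum_congr rfl hcong, Finset.sum_neg_distrib]
      abel
    · rw [Finset.Icc_eq_empty (by omega), Finset.Icc_eq_empty (by omega)]
      have hfz : f (r - 1) t = 0 := by
        show pd L (r - 1) (rjet k ξ t) = 0
        unfold pd
        rw [dif_neg (by omega)]
      simp [hfz]
  -- π = p 0
  have hπ0 : π = p 0 := by
    rw [hπ, hp 0]
    have hicc : Finset.Icc 0 (k - 1) = Finset.range k := by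
      ext j; simp only [Finset.mem_Icc, Finset.mem_range]; omega
    simp [hicc]
  -- derivative of the bracket terms
  have hB : ∀ r t, HasDerivAt (fun t => bra (iteratedDeriv r ξ t) η)
      (bra (iteratedDeriv (r + 1) ξ t) η) t := by
    intro r t
    have h1 : ContDiff ℝ (⊤ : ℕ∞) (iteratedDeriv r ξ) := by
      simpa [iteratedDeriv_eq_iterate] using hξ.iterate_deriv r
    have hdξ : HasDerivAt (iteratedDeriv r ξ) (iteratedDeriv (r + 1) ξ t) t := by
      rw [iteratedDeriv_succ]
      exact ((h1.differentiable (by simp)) t).hasDerivAt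
    exact (LinearMap.toContinuousLinearMap (bra.flip η)).hasFDerivAt.comp_hasDerivAt t hdξ
  -- G has zero derivative on the interval
  have hG0 : ∀ t ∈ Set.Icc t₀ t₁, HasDerivAt G 0 t := by
    intro t htmem
    have h0 : HasDerivAt (fun t : ℝ => p 0 t η)
        ((∑ j ∈ Finset.Icc 0 (k - 1),
          (-1 : ℝ) ^ (j - 0) • iteratedDeriv (j - 0 + 1) (f j) t) η + p 0 t 0) t :=
      (hpderiv 0 t).clm_apply (hasDerivAt_const t η)
    have hsum : HasDerivAt
        (fun t => ∑ r ∈ Finset.Icc 1 (k - 1), p r t (bra (iteratedDeriv (r - 1) ξ t) η))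
        (∑ r ∈ Finset.Icc 1 (k - 1),
          ((f (r - 1) t - p (r - 1) t) (bra (iteratedDeriv (r - 1) ξ t) η)
            + p r t (bra (iteratedDeriv r ξ t) η))) t := by
      refine HasDerivAt.fun_sum fun r hr => ?_
      have hr1 : 1 ≤ r := (Finset.mem_Icc.mp hr).1
      have hb := hB (r - 1) t
      rw [Nat.sub_add_cancel hr1] at hb
      exact (hstep r hr1 t).clm_apply hb
    have hda : HasDerivAt G
        ((∑ j ∈ Finset.Icc 0 (k - 1),
            (-1 : ℝ) ^ (j - 0) • iteratedDeriv (j - 0 + 1) (f j) t) η + p 0 t 0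
          + ∑ r ∈ Finset.Icc 1 (k - 1),
            ((f (r - 1) t - p (r - 1) t) (bra (iteratedDeriv (r - 1) ξ t) η)
              + p r t (bra (iteratedDeriv r ξ t) η))) t := by
      rw [hG]; exact h0.add hsum
    have hq : deriv (p 0) t = ∑ j ∈ Finset.Icc 0 (k - 1),
        (-1 : ℝ) ^ (j - 0) • iteratedDeriv (j - 0 + 1) (f j) t := (hpderiv 0 t).deriv
    have hEPt : (∑ j ∈ Finset.Icc 0 (k - 1),
        (-1 : ℝ) ^ (j - 0) • iteratedDeriv (j - 0 + 1) (f j) t) η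
          = p 0 t (bra (iteratedDeriv 0 ξ t) η) := by
      rw [← hq, ← hπ0, iteratedDeriv_zero]
      exact hEP t htmem η
    have hval : ((∑ j ∈ Finset.Icc 0 (k - 1),
          (-1 : ℝ) ^ (j - 0) • iteratedDeriv (j - 0 + 1) (f j) t) η + p 0 t 0
        + ∑ r ∈ Finset.Icc 1 (k - 1),
          ((f (r - 1) t - p (r - 1) t) (bra (iteratedDeriv (r - 1) ξ t) η)
            + p r t (bra (iteratedDeriv r ξ t) η))) = 0 := by
      rw [map_zero, add_zero, hEPt]
      have hre : ∀ g : ℕ → ℝ, ∑ r ∈ Finset.Icc 1 (k - 1), g r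
          = ∑ i ∈ Finset.range (k - 1), g (i + 1) := by
        intro g
        have hIcc : Finset.Icc 1 (k - 1) = Finset.Ico 1 k := by
          ext j; simp only [Finset.mem_Icc, Finset.mem_Ico]; omega
        rw [hIcc, Finset.sum_Ico_eq_sum_range]
        exact Finset.sum_congr rfl fun i _ => by rw [add_comm]
      rw [hre]
      have hterm : ∀ i ∈ Finset.range (k - 1),
          ((f (i + 1 - 1) t - p (i + 1 - 1) t) (bra (iteratedDeriv (i + 1 - 1) ξ t) η)
            + p (i + 1) t (bra (iteratedDeriv (i + 1) ξ t) η))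
          = (f i t (bra (iteratedDeriv i ξ t) η)
            + (p (i + 1) t (bra (iteratedDeriv (i + 1) ξ t) η)
               - p i t (bra (iteratedDeriv i ξ t) η))) := by
        intro i _
        simp only [Nat.add_sub_cancel, ContinuousLinearMap.sub_apply]
        ring
      rw [Finset.sum_congr rfl hterm, Finset.sum_add_distrib,
        Finset.sum_range_sub (fun i => p i t (bra (iteratedDeriv i ξ t) η))]
      rw [hpk1 t]
      have hfsum : ∑ i ∈ Finset.range k, f i t (bra (iteratedDeriv i ξ t) η) = 0 := by
        rw [← Fin.sum_univ_eq_sum_range (fun i => f i t (bra (iteratedDeriv i ξ t) η)) k]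
        have := hsym (rjet k ξ t)
        simpa [hf_def, rjet] using this
      have hrange : Finset.range k = Finset.range ((k - 1) + 1) := by
        rw [Nat.sub_add_cancel hk]
      rw [hrange, Finset.sum_range_succ] at hfsum
      linarith [hfsum]
    rw [hval] at hda
    exact hda
  -- conclude by the mean value inequality
  intro s hs t htmem
  have hbound := Convex.norm_image_sub_le_of_norm_hasDerivWithin_le
    (f := G) (f' := fun _ => (0 : ℝ)) (C := 0)
    (fun x hx => (hG0 x hx).hasDerivWithinAt) (fun x _ => by simp)
    (convex_Icc t₀ t₁) htmem hs
  have h1 : ‖G s - G t‖ ≤ 0 := by simpa using hbound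
  have h2 := le_antisymm h1 (norm_nonneg _)
  rwa [norm_eq_zero, sub_eq_zero] at h2
end
end

section
/- (Commutation of the vertical endomorphism with the total time derivative; Proposition 5.2 in the coordinate model.) Let λ be a 1-form of order k. Then S(d_Tλ) − d_T(Sλ) = λ as 1-forms of order k+1; componentwise, for every A ∈ J_{k+1} and every 0 ≤ r ≤ k+1: (S(d_Tλ))(A)_r − (d_T(Sλ))(A)_r = λ(Ā)_r (interpreting λ(Ā)_{k+1} := 0). -/
noncomputable section

/-- The space of `k`-jets `J_k = (ℝ^n)^{k+1}`, slots indexed `0,…,k`. -/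
abbrev Jet (n k : ℕ) := Fin (k + 1) → EuclideanSpace ℝ (Fin n)

/-- A `1`-form of order `k` in the coordinate model: a map from `J_k` to the
`(k+1)`-tuples of linear functionals on `ℝ^n`. -/
abbrev OneForm (n k : ℕ) := Jet n k → Fin (k + 1) → (EuclideanSpace ℝ (Fin n) →L[ℝ] ℝ)

/-- Truncation of a jet to lower order. -/
def trunc {n k m : ℕ} (h : m ≤ k) (A : Jet n k) : Jet n m := fun i => A ⟨i, by omega⟩

/-- The `r`-th component of a 1-form at a jet, with the convention that components of
index `> k` are zero. -/
def comp' {n k : ℕ} (lam : OneForm n k) (A : Jet n k) (r : ℕ) :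
    EuclideanSpace ℝ (Fin n) →L[ℝ] ℝ :=
  if h : r < k + 1 then lam A ⟨r, h⟩ else 0

/-- The `r`-th component at a (possibly higher-order) jet of a 1-form of order `m`,
regarded as a 1-form of any order `k ≥ m` by precomposing with truncation. -/
def compAt {n k m : ℕ} (lam : OneForm n m) (A : Jet n k) (r : ℕ) :
    EuclideanSpace ℝ (Fin n) →L[ℝ] ℝ :=
  if h : m ≤ k then comp' lam (trunc h A) r else 0

/-- The vertical endomorphism: `(Sλ)(A)_r = (r+1) ⬝ λ(A)_{r+1}`. -/
def VS {n k : ℕ} (lam : OneForm n k) : OneForm n k :=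
  fun A r => (((r : ℕ) + 1 : ℕ) : ℝ) • comp' lam A ((r : ℕ) + 1)

/-- The total time derivative of a map `F : J_k → W`:
`D_T F (A) = ∑_{j=0}^{k} ∂_j F(Ā)(A_{j+1})`. -/
def DT {n k : ℕ} {W : Type*} [NormedAddCommGroup W] [NormedSpace ℝ W]
    (F : Jet n k → W) (A : Jet n (k + 1)) : W :=
  ∑ j : Fin (k + 1), pd F j (trunc (Nat.le_succ k) A) (A j.succ)

/-- The total time derivative of a 1-form of order `k`:
`(d_Tλ)(A)_r = D_T(λ_{(r)})(A) + λ(Ā)_{r-1}`, with `λ(Ā)_{-1} := 0`. -/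
def dT {n k : ℕ} (lam : OneForm n k) : OneForm n (k + 1) :=
  fun A r =>
    DT (fun B => comp' lam B r) A +
      match (r : ℕ) with
      | 0 => 0
      | (s + 1) => comp' lam (trunc (Nat.le_succ k) A) s

/-- Iterated total time derivative of a 1-form. -/
def dTiter {n k : ℕ} : (j : ℕ) → OneForm n k → OneForm n (k + j)
  | 0, lam => lam
  | (j + 1), lam => dT (dTiter j lam)

end

noncomputable section

lemma pd_smul {m : ℕ} {E W : Type*} [NormedAddCommGroup E] [NormedSpace ℝ E]
    [NormedAddCommGroup W] [NormedSpace ℝ W]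
    (F : (Fin m → E) → W) (hF : Differentiable ℝ F) (c : ℝ) (r : ℕ) (A : Fin m → E) :
    pd (fun B => c • F B) r A = c • pd F r A := by
  unfold pd
  split
  · rw [fderiv_fun_const_smul (hF A) c]
    ext v
    simp
  · simp

lemma DT_smul {n k : ℕ} {W : Type*} [NormedAddCommGroup W] [NormedSpace ℝ W]
    (F : Jet n k → W) (hF : Differentiable ℝ F) (c : ℝ) (A : Jet n (k + 1)) :
    DT (fun B => c • F B) A = c • DT F A := by
  unfold DT
  rw [Finset.smul_sum]
  refine Finset.sum_congr rfl fun j _ => ?_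
  rw [pd_smul F hF c]
  rfl

lemma diff_comp' {n k : ℕ} (lam : OneForm n k) (hlam : ContDiff ℝ (⊤ : ℕ∞) lam) (s : ℕ) :
    Differentiable ℝ (fun B => comp' lam B s) := by
  by_cases h : s < k + 1
  · simp only [comp', dif_pos h]
    exact (differentiable_pi.mp (hlam.differentiable (by simp))) ⟨s, h⟩
  · simp only [comp', dif_neg h]
    exact differentiable_const 0

/-- **Commutation of the vertical endomorphism with the total time derivative**
(Proposition 5.2 of the paper, in the coordinate model): for a smooth 1-form `λ` of
order `k`, `S(d_Tλ) − d_T(Sλ) = λ` as 1-forms of order `k+1`, componentwise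
`(S(d_Tλ))(A)_r − (d_T(Sλ))(A)_r = λ(Ā)_r` (with `λ(Ā)_{k+1} := 0`). -/
theorem vertical_endomorphism_commutation (n k : ℕ) (hn : 1 ≤ n)
    (lam : OneForm n k) (hlam : ContDiff ℝ (⊤ : ℕ∞) lam) :
    ∀ A : Jet n (k + 1), ∀ r : ℕ, r ≤ k + 1 →
      comp' (VS (dT lam)) A r - comp' (dT (VS lam)) A r =
        comp' lam (trunc (Nat.le_succ k) A) r := by
  intro A r hr
  set Ab := trunc (Nat.le_succ k) A with hAb
  have hd : ∀ s : ℕ, Differentiable ℝ (fun B => comp' lam B s) := diff_comp' lam hlam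
  have hr2 : r < k + 2 := by omega
  -- simplify outer comp's
  have hVSeq : ∀ (B : Jet n k) (s : ℕ), s ≤ k →
      comp' (VS lam) B s = ((s : ℝ) + 1) • comp' lam B (s + 1) := by
    intro B s hs
    have hs' : s < k + 1 := by omega
    simp [comp', dif_pos hs', VS]
  rcases Nat.lt_or_ge r (k + 1) with h | h
  · -- r ≤ k
    have hrk : r ≤ k := by omega
    have e1 : comp' (VS (dT lam)) A r
        = ((r : ℝ) + 1) • comp' (dT lam) A (r + 1) := by
      simp [comp', dif_pos hr2, VS]
    have hr1 : r + 1 < k + 2 := by omega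
    have e2 : comp' (dT lam) A (r + 1)
        = DT (fun B => comp' lam B (r + 1)) A + comp' lam Ab r := by
      simp only [comp', dif_pos hr1]
      rfl
    have e3 : comp' (dT (VS lam)) A r
        = ((r : ℝ) + 1) • DT (fun B => comp' lam B (r + 1)) A
          + (r : ℝ) • comp' lam Ab r := by
      simp only [comp', dif_pos hr2]
      show DT (fun B => comp' (VS lam) B r) A + _ = _
      have hfun : (fun B => comp' (VS lam) B r)
          = fun B => ((r : ℝ) + 1) • comp' lam B (r + 1) := by
        funext B; exact hVSeq B r hrk
      rw [hfun, DT_smul _ (hd (r + 1))]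
      congr 1
      match r with
      | 0 => simp
      | s + 1 =>
        show comp' (VS lam) Ab s = _
        rw [hVSeq Ab s (by omega)]
        congr 1
        push_cast
        ring
    rw [e1, e2, e3]
    module
  · -- r = k + 1
    have hrk : r = k + 1 := by omega
    subst hrk
    have e1 : comp' (VS (dT lam)) A (k + 1) = 0 := by
      have : comp' (dT lam) A (k + 1 + 1) = 0 := by
        simp [comp']
      simp [comp', VS, this]
    have e2 : comp' (dT (VS lam)) A (k + 1) = 0 := by
      simp only [comp', dif_pos hr2]
      show DT (fun B => comp' (VS lam) B (k + 1)) A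
          + comp' (VS lam) Ab k = 0
      have hfun : (fun B : Jet n k => comp' (VS lam) B (k + 1))
          = fun _ => (0 : ℝ) • (0 : EuclideanSpace ℝ (Fin n) →L[ℝ] ℝ) := by
        funext B; simp [comp']
      rw [hfun, DT_smul _ (differentiable_const _), hVSeq Ab k le_rfl]
      have : comp' lam Ab (k + 1) = 0 := by simp [comp']
      simp [this]
    have e3 : comp' lam Ab (k + 1) = 0 := by simp [comp']
    rw [e1, e2, e3, sub_zero]
end
end

section
/- (The variational operator produces semibasic forms; coordinate model.) Let λ be a 1-form of order k and define the variational operator 𝔼(λ) := ∑_{j=0}^{k} ((−1)^j / j!) · d_T^j(S^jλ), a 1-form of order 2k (each summand d_T^j(S^jλ) has order k+j and is regarded as a 1-form of order 2k). Then (𝔼λ)(A)_r = 0 for every A ∈ J_{2k} and every r ≥ 1; equivalently S(𝔼λ) = 0, i.e. 𝔼λ is semibasic of order 0. -/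
noncomputable section
namespace VarOp

variable {n k m p q : ℕ} {W : Type*} [NormedAddCommGroup W] [NormedSpace ℝ W]

lemma trunc_trunc {h2 : m ≤ k} {h1 : k ≤ p} (A : Jet n p) (h3 : m ≤ p) :
    trunc h2 (trunc h1 A) = trunc h3 A := rfl

def truncCLM {n : ℕ} (m k : ℕ) (h : m ≤ k) : (Jet n k) →L[ℝ] (Jet n m) :=
  ContinuousLinearMap.pi (fun i => ContinuousLinearMap.proj ⟨(i : ℕ), by omega⟩)

lemma DT_eq (F : Jet n k → W) (A : Jet n (k+1)) :
    DT F A = fderiv ℝ F (trunc (Nat.le_succ k) A) (fun i => A i.succ) := by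
  unfold DT pd
  have h1 : ∀ j : Fin (k+1),
      (dite ((j:ℕ) < k+1) (fun h => (fderiv ℝ F (trunc (Nat.le_succ k) A)).comp
        (ContinuousLinearMap.pi (Pi.single (⟨(j:ℕ), h⟩ : Fin (k+1)) (ContinuousLinearMap.id ℝ (EuclideanSpace ℝ (Fin n)))))) (fun _ => 0) : EuclideanSpace ℝ (Fin n) →L[ℝ] W) (A j.succ)
        = fderiv ℝ F (trunc (Nat.le_succ k) A) (Pi.single j (A j.succ)) := by
    intro j
    rw [dif_pos j.isLt]
    simp only [ContinuousLinearMap.comp_apply, ContinuousLinearMap.pi_apply]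
    congr 1
    funext i
    rcases eq_or_ne i j with h | h <;> simp [h, Pi.single_apply]
  simp only [h1]
  rw [← map_sum]
  congr 1
  exact Finset.univ_sum_single _

lemma DT_const (c : W) (A : Jet n (k+1)) : DT (fun _ => c) A = 0 := by
  rw [DT_eq]; simp

lemma DT_add {F G : Jet n k → W} (hF : Differentiable ℝ F) (hG : Differentiable ℝ G)
    (A : Jet n (k+1)) : DT (fun B => F B + G B) A = DT F A + DT G A := by
  simp only [DT_eq]
  rw [fderiv_fun_add (hF _) (hG _)]
  simp

lemma DT_smul {F : Jet n k → W} (hF : Differentiable ℝ F) (c : ℝ)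
    (A : Jet n (k+1)) : DT (fun B => c • F B) A = c • DT F A := by
  simp only [DT_eq]
  rw [fderiv_fun_const_smul (hF _) c]
  simp

lemma contDiff_trunc (h : m ≤ k) : ContDiff ℝ (⊤:ℕ∞) (trunc (n := n) h) := by
  have : trunc (n := n) h = truncCLM m k h := rfl
  rw [this]
  exact (truncCLM m k h).contDiff

lemma DT_trunc (h : p ≤ q) {F : Jet n p → W} (hF : Differentiable ℝ F) (A : Jet n (q+1)) :
    DT (fun B => F (trunc h B)) A = DT F (trunc (by omega : p + 1 ≤ q + 1) A) := by
  simp only [DT_eq]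
  have hc : (fun B : Jet n q => F (trunc h B)) = F ∘ (truncCLM p q h) := rfl
  rw [hc, fderiv_comp _ (hF _) (truncCLM p q h).differentiableAt,
    (truncCLM p q h).fderiv]
  rfl

lemma contDiff_DT {F : Jet n k → W} (hF : ContDiff ℝ (⊤:ℕ∞) F) :
    ContDiff ℝ (⊤:ℕ∞) (DT F) := by
  have hd : DT F = fun A : Jet n (k+1) =>
      (fderiv ℝ F (trunc (Nat.le_succ k) A)) (fun i => A i.succ) := funext (DT_eq F)
  rw [hd]
  have h1 : ContDiff ℝ (⊤:ℕ∞) (fun A : Jet n (k+1) => fderiv ℝ F (trunc (Nat.le_succ k) A)) :=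
    (hF.fderiv_right (by exact_mod_cast le_top)).comp (contDiff_trunc _)
  have h2 : ContDiff ℝ (⊤:ℕ∞) (fun (A : Jet n (k+1)) (i : Fin (k+1)) => A i.succ) :=
    contDiff_pi.2 fun i => (ContinuousLinearMap.proj (R := ℝ) (φ := fun _ : Fin (k+2) => EuclideanSpace ℝ (Fin n)) i.succ).contDiff
  exact h1.clm_apply h2

-- comp' basics
lemma comp'_lt {μ : OneForm n k} {A : Jet n k} {r : ℕ} (h : r < k + 1) :
    comp' μ A r = μ A ⟨r, h⟩ := dif_pos h

lemma comp'_ge {μ : OneForm n k} {A : Jet n k} {r : ℕ} (h : k < r) :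
    comp' μ A r = 0 := dif_neg (by omega)

lemma comp'_VS (μ : OneForm n k) (A : Jet n k) (r : ℕ) :
    comp' (VS μ) A r = ((r + 1 : ℕ) : ℝ) • comp' μ A (r + 1) := by
  by_cases h : r < k + 1
  · rw [comp'_lt h]; rfl
  · rw [comp'_ge (by omega), comp'_ge (by omega), smul_zero]

lemma comp'_dT_zero (μ : OneForm n k) (A : Jet n (k+1)) :
    comp' (dT μ) A 0 = DT (fun B => comp' μ B 0) A := by
  rw [comp'_lt (by omega : 0 < k + 2)]
  show DT _ A + 0 = _
  rw [add_zero]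

lemma comp'_dT_succ (μ : OneForm n k) (A : Jet n (k+1)) (s : ℕ) :
    comp' (dT μ) A (s+1) = DT (fun B => comp' μ B (s+1)) A
      + comp' μ (trunc (Nat.le_succ k) A) s := by
  by_cases h : s + 1 < k + 2
  · rw [comp'_lt h]; rfl
  · rw [comp'_ge (by omega)]
    have h1 : (fun B : Jet n k => comp' μ B (s+1)) = fun _ => 0 :=
      funext fun B => comp'_ge (by omega)
    rw [h1, DT_const, comp'_ge (by omega), add_zero]

-- Smoothness of forms, componentwise
def SmoothForm (μ : OneForm n k) : Prop :=
  ∀ r : ℕ, ContDiff ℝ (⊤:ℕ∞) (fun B => comp' μ B r)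

lemma SmoothForm.ofContDiff {μ : OneForm n k} (hμ : ContDiff ℝ (⊤:ℕ∞) μ) :
    SmoothForm μ := by
  intro r
  by_cases h : r < k + 1
  · have : (fun B => comp' μ B r) = fun B => μ B ⟨r, h⟩ := funext fun B => comp'_lt h
    rw [this]
    exact contDiff_pi.1 hμ _
  · have : (fun B => comp' μ B r) = fun _ => 0 := funext fun B => comp'_ge (by omega)
    rw [this]; exact contDiff_const

lemma SmoothForm.vs {μ : OneForm n k} (hμ : SmoothForm μ) : SmoothForm (VS μ) := by
  intro r
  have : (fun B => comp' (VS μ) B r) = fun B => ((r+1:ℕ):ℝ) • comp' μ B (r+1) :=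
    funext fun B => comp'_VS μ B r
  rw [this]
  exact (hμ (r+1)).const_smul _

lemma SmoothForm.vsIter {μ : OneForm n k} (hμ : SmoothForm μ) (j : ℕ) :
    SmoothForm (VS^[j] μ) := by
  induction j with
  | zero => exact hμ
  | succ j ih => rw [Function.iterate_succ_apply']; exact ih.vs

lemma SmoothForm.dt {μ : OneForm n k} (hμ : SmoothForm μ) : SmoothForm (dT μ) := by
  intro r
  match r with
  | 0 =>
    have : (fun B => comp' (dT μ) B 0) = DT (fun B => comp' μ B 0) :=
      funext fun B => comp'_dT_zero μ B
    rw [this]; exact contDiff_DT (hμ 0)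
  | (s+1) =>
    have : (fun B => comp' (dT μ) B (s+1)) =
        fun B => DT (fun C => comp' μ C (s+1)) B + comp' μ (trunc (Nat.le_succ k) B) s :=
      funext fun B => comp'_dT_succ μ B s
    rw [this]
    exact (contDiff_DT (hμ (s+1))).add ((hμ s).comp (contDiff_trunc _))

lemma SmoothForm.dtIter {μ : OneForm n k} (hμ : SmoothForm μ) (j : ℕ) :
    SmoothForm (dTiter j μ) := by
  induction j with
  | zero => exact hμ
  | succ j ih => exact ih.dt

end VarOp
end
noncomputable section
namespace VarOp
variable {n k m : ℕ}

lemma dTiter_succ (j : ℕ) (μ : OneForm n m) : dTiter (j+1) μ = dT (dTiter j μ) := rfl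

/-- S∘d_T = d_T∘S + id at component level. -/
lemma comp'_VS_dT {μ : OneForm n m} (hμ : SmoothForm μ) (A : Jet n (m+1)) (r : ℕ) :
    comp' (VS (dT μ)) A r
      = comp' (dT (VS μ)) A r + comp' μ (trunc (Nat.le_succ m) A) r := by
  have hVS : ∀ t : ℕ, (fun B : Jet n m => comp' (VS μ) B t)
      = fun B => ((t+1:ℕ):ℝ) • comp' μ B (t+1) := fun t => funext fun B => comp'_VS μ B t
  rw [comp'_VS, comp'_dT_succ]
  match r with
  | 0 =>
    rw [comp'_dT_zero, hVS 0, DT_smul ((hμ 1).differentiable (by simp)) _ A]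
    push_cast
    rw [smul_add]
    module
  | (s+1) =>
    rw [comp'_dT_succ, hVS (s+1),
      DT_smul ((hμ (s+2)).differentiable (by simp)) _ A, comp'_VS]
    push_cast
    rw [smul_add]
    module

/-- Push a combination identity through `d_T`. -/
lemma comp'_dT_combo {μ₁ μ₂ : OneForm n (m+1)} {μ₃ : OneForm n m} {c : ℝ}
    (h₂ : SmoothForm μ₂) (h₃ : SmoothForm μ₃)
    (hid : ∀ (B : Jet n (m+1)) (s : ℕ),
      comp' μ₁ B s = comp' μ₂ B s + c • comp' μ₃ (trunc (Nat.le_succ m) B) s)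
    (A : Jet n (m+2)) (r : ℕ) :
    comp' (dT μ₁) A r = comp' (dT μ₂) A r
      + c • comp' (dT μ₃) (trunc (Nat.le_succ (m+1)) A) r := by
  have hdiff3 : ∀ t : ℕ, Differentiable ℝ (fun B : Jet n m => comp' μ₃ B t) :=
    fun t => (h₃ t).differentiable (by simp)
  have hdiff3' : ∀ t : ℕ, Differentiable ℝ
      (fun B : Jet n (m+1) => comp' μ₃ (trunc (Nat.le_succ m) B) t) := by
    intro t
    exact (((h₃ t).comp (contDiff_trunc _))).differentiable (by simp)
  have hDT : ∀ t : ℕ, DT (fun B : Jet n (m+1) => comp' μ₁ B t) A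
      = DT (fun B => comp' μ₂ B t) A
        + c • DT (fun B : Jet n m => comp' μ₃ B t) (trunc (Nat.le_succ (m+1)) A) := by
    intro t
    have h1 : (fun B : Jet n (m+1) => comp' μ₁ B t)
        = fun B => comp' μ₂ B t + c • comp' μ₃ (trunc (Nat.le_succ m) B) t :=
      funext fun B => hid B t
    rw [h1, DT_add (G := fun B => c • comp' μ₃ (trunc (Nat.le_succ m) B) t) ((h₂ t).differentiable (by simp))
        ((hdiff3' t).const_smul c) A,
      DT_smul (hdiff3' t) c A,
      DT_trunc (Nat.le_succ m) (hdiff3 t) A]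
  match r with
  | 0 =>
    rw [comp'_dT_zero, comp'_dT_zero, comp'_dT_zero, hDT 0]
  | (s+1) =>
    rw [comp'_dT_succ, comp'_dT_succ, comp'_dT_succ, hDT (s+1), hid]
    rw [smul_add]
    abel

/-- Telescoped commutation: S d_T^{j+1} = d_T^{j+1} S + (j+1) d_T^j. -/
lemma comp'_VS_dTiter {ν : OneForm n m} (hν : SmoothForm ν) :
    ∀ (j : ℕ) (A : Jet n (m + (j+1))) (r : ℕ),
      comp' (VS (dTiter (j+1) ν)) A r
        = comp' (dTiter (j+1) (VS ν)) A r
          + ((j+1 : ℕ) : ℝ) • comp' (dTiter j ν) (trunc (by omega : m + j ≤ m + (j+1)) A) r := by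
  intro j
  induction j with
  | zero =>
    intro A r
    have := comp'_VS_dT hν A r
    simp only [zero_add, Nat.cast_one, one_smul]
    exact this
  | succ j ih =>
    intro A r
    rw [dTiter_succ (j+1) ν, dTiter_succ (j+1) (VS ν)]
    have hT1 := comp'_VS_dT (hν.dtIter (j+1)) A r
    have hT2 := comp'_dT_combo (μ₁ := VS (dTiter (j+1) ν))
      (μ₂ := dTiter (j+1) (VS ν)) (μ₃ := dTiter j ν) (c := ((j+1:ℕ):ℝ))
      ((hν.vs).dtIter (j+1)) (hν.dtIter j) ih A r
    rw [← dTiter_succ j ν] at hT2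
    rw [hT1, hT2, add_assoc]
    congr 1
    push_cast
    module

/-- S^j kills components of index beyond m - j. -/
lemma comp'_vsIter_ge (μ : OneForm n m) :
    ∀ (j : ℕ) (B : Jet n m) (s : ℕ), m < s + j → comp' (VS^[j] μ) B s = 0 := by
  intro j
  induction j with
  | zero => intro B s hs; exact comp'_ge (by omega)
  | succ j ih =>
    intro B s hs
    rw [Function.iterate_succ_apply', comp'_VS, ih B (s+1) (by omega), smul_zero]

/-- d_T^j of a componentwise-zero form is componentwise zero. -/
lemma comp'_dTiter_zero {ν : OneForm n m} (hν : ∀ B t, comp' ν B t = 0) :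
    ∀ (j : ℕ) (A : Jet n (m + j)) (t : ℕ), comp' (dTiter j ν) A t = 0 := by
  intro j
  induction j with
  | zero => exact hν
  | succ j ih =>
    intro A t
    rw [dTiter_succ]
    match t with
    | 0 =>
      rw [comp'_dT_zero (dTiter j ν) A]
      have : (fun B : Jet n (m+j) => comp' (dTiter j ν) B 0) = fun _ => 0 :=
        funext fun B => ih B 0
      rw [this, DT_const]
    | (s+1) =>
      rw [comp'_dT_succ (dTiter j ν) A s]
      have h1 : (fun B : Jet n (m+j) => comp' (dTiter j ν) B (s+1)) = fun _ => 0 :=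
        funext fun B => ih B (s+1)
      rw [h1, DT_const, ih, add_zero]

end VarOp
end

noncomputable section

/-- The variational operator `𝔼(λ) = ∑_{j=0}^{k} ((−1)^j/j!) d_T^j(S^jλ)`, a 1-form of
order `2k` (each summand `d_T^j(S^jλ)` has order `k+j` and is regarded as a 1-form of
order `2k` via truncation). -/
def Evar {n k : ℕ} (lam : OneForm n k) : OneForm n (2 * k) :=
  fun A r => ∑ j ∈ Finset.range (k + 1),
    ((-1 : ℝ) ^ j / (j.factorial : ℝ)) • compAt (dTiter j (VS^[j] lam)) A r

namespace VarOp

lemma compAt_eq {μ : OneForm n m} {A : Jet n k} (h : m ≤ k) (r : ℕ) :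
    compAt μ A r = comp' μ (trunc h A) r := dif_pos h

lemma comp'_Evar {n k : ℕ} (lam : OneForm n k) (A : Jet n (2*k)) (t : ℕ) :
    comp' (Evar lam) A t = ∑ j ∈ Finset.range (k+1),
      ((-1:ℝ)^j / (j.factorial : ℝ)) • compAt (dTiter j (VS^[j] lam)) A t := by
  by_cases h : t < 2*k + 1
  · rw [comp'_lt h]; rfl
  · rw [comp'_ge (by omega)]
    symm
    refine Finset.sum_eq_zero fun j hj => ?_
    have hj' : j ≤ k := by simpa using Nat.lt_succ_iff.mp (Finset.mem_range.mp hj)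
    rw [compAt_eq (by omega : k + j ≤ 2*k), comp'_ge (by omega), smul_zero]


lemma factorial_coeff (j : ℕ) :
    ((-1:ℝ)^(j+1) / ((j+1).factorial : ℝ)) * ((j+1 : ℕ) : ℝ)
      = -((-1:ℝ)^j / (j.factorial : ℝ)) := by
  have h1 : ((j.factorial : ℝ)) ≠ 0 := Nat.cast_ne_zero.2 (Nat.factorial_ne_zero j)
  have h2 : ((j+1 : ℕ) : ℝ) ≠ 0 := Nat.cast_ne_zero.2 (Nat.succ_ne_zero j)
  rw [pow_succ, Nat.factorial_succ]
  push_cast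
  field_simp

lemma key {n k : ℕ} (lam : OneForm n k) (hlam : SmoothForm lam)
    (A : Jet n (2*k)) (s : ℕ) :
    ((s+1:ℕ):ℝ) • comp' (Evar lam) A (s+1) = 0 := by
  set g : ℕ → (EuclideanSpace ℝ (Fin n) →L[ℝ] ℝ) := fun j =>
    ((-1:ℝ)^j / (j.factorial : ℝ)) • compAt (dTiter j (VS^[j+1] lam)) A s with hg
  have step1 : ((s+1:ℕ):ℝ) • comp' (Evar lam) A (s+1)
      = ∑ j ∈ Finset.range (k+1), ((-1:ℝ)^j / (j.factorial:ℝ)) •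
          compAt (VS (dTiter j (VS^[j] lam))) A s := by
    rw [comp'_Evar, Finset.smul_sum]
    refine Finset.sum_congr rfl fun j _ => ?_
    rw [smul_comm]
    congr 1
    unfold compAt
    split_ifs with h
    · rw [comp'_VS]
    · rw [smul_zero]
  have hf0 : ((-1:ℝ)^0 / ((0:ℕ).factorial:ℝ)) •
      compAt (VS (dTiter 0 (VS^[0] lam))) A s = g 0 := by
    simp only [hg, pow_zero, Nat.factorial_zero, Function.iterate_one]
    norm_num
    rfl
  have hstep : ∀ j, j + 1 ≤ k →
      ((-1:ℝ)^(j+1) / ((j+1).factorial:ℝ)) •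
        compAt (VS (dTiter (j+1) (VS^[j+1] lam))) A s = g (j+1) - g j := by
    intro j hj
    have h1 : k + (j+1) ≤ 2*k := by omega
    have h2 : k + j ≤ 2*k := by omega
    rw [compAt_eq h1, comp'_VS_dTiter (hlam.vsIter (j+1)) j (trunc h1 A) s]
    simp only [hg]
    rw [compAt_eq (A := A) h1, compAt_eq (A := A) h2]
    rw [← Function.iterate_succ_apply' VS (j+1) lam]
    rw [smul_add, smul_smul, factorial_coeff, sub_eq_add_neg]
    congr 1
    exact neg_smul (R := ℝ) (M := EuclideanSpace ℝ (Fin n) →L[ℝ] ℝ) _ _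
  rw [step1, Finset.sum_range_succ']
  rw [Finset.sum_congr rfl (fun j hj => hstep j (by
    have := Finset.mem_range.mp hj; omega))]
  rw [Finset.sum_range_sub, hf0]
  have hgk : g k = 0 := by
    simp only [hg]
    rw [compAt_eq (by omega : k + k ≤ 2*k)]
    rw [comp'_dTiter_zero (fun B t => comp'_vsIter_ge lam (k+1) B t (by omega)) k _ s,
      smul_zero]
  rw [hgk]
  abel

end VarOp

/-- **The variational operator produces semibasic forms** (coordinate model): for a
smooth 1-form `λ` of order `k`, all components of `𝔼λ` of index `≥ 1` vanish;
equivalently `S(𝔼λ) = 0`, i.e. `𝔼λ` is semibasic of order `0`. -/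
theorem variational_operator_semibasic (n k : ℕ) (hn : 1 ≤ n)
    (lam : OneForm n k) (hlam : ContDiff ℝ (⊤ : ℕ∞) lam) :
    (∀ (A : Jet n (2 * k)) (r : ℕ), 1 ≤ r → comp' (Evar lam) A r = 0) ∧
      (VS (Evar lam) = fun _ _ => 0) := by
  have hsm : VarOp.SmoothForm lam := VarOp.SmoothForm.ofContDiff hlam
  have first : ∀ (A : Jet n (2 * k)) (r : ℕ), 1 ≤ r → comp' (Evar lam) A r = 0 := by
    intro A r hr
    obtain ⟨s, rfl⟩ : ∃ s, r = s + 1 := ⟨r - 1, by omega⟩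
    have hk := VarOp.key lam hsm A s
    have hne : ((s + 1 : ℕ) : ℝ) ≠ 0 := Nat.cast_ne_zero.2 (Nat.succ_ne_zero s)
    exact (smul_eq_zero.mp hk).resolve_left hne
  refine ⟨first, ?_⟩
  funext A i
  show (((i : ℕ) + 1 : ℕ) : ℝ) • comp' (Evar lam) A ((i : ℕ) + 1) = 0
  rw [first A _ (by omega), smul_zero]

end
end

section
/- (Properties of the Cartan operator; coordinate model.) For a 1-form λ of order k (k ≥ 1) define the Cartan operator 𝕊(λ) := ∑_{j=1}^{k} ((−1)^{j−1} / j!) · d_T^{j−1}(S^jλ), a 1-form of order 2k−1 (each summand regarded as a 1-form of order 2k−1). Then: (i) (𝕊λ)(A)_r = 0 for every A ∈ J_{2k−1} and every r ≥ k, i.e. 𝕊λ is semibasic of order k−1; (ii) applying the Cartan operator of order k+1 to d_Tλ recovers λ: 𝕊(d_Tλ) = λ as 1-forms of order 2k+1, where 𝕊(d_Tλ) := ∑_{j=1}^{k+1} ((−1)^{j−1} / j!) · d_T^{j−1}(S^j(d_Tλ)). -/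
noncomputable section
namespace CartanAux

variable {n k m : ℕ}

/-- Truncation as a continuous linear map. -/
def truncL (n : ℕ) {m k : ℕ} (h : m ≤ k) : Jet n k →L[ℝ] Jet n m :=
  ContinuousLinearMap.pi (fun i => ContinuousLinearMap.proj ⟨(i : ℕ), by omega⟩)

lemma truncL_apply (h : m ≤ k) (A : Jet n k) : truncL n h A = trunc h A := rfl

/-- Shift as a continuous linear map. -/
def shiftL (n k : ℕ) : Jet n (k+1) →L[ℝ] Jet n k :=
  ContinuousLinearMap.pi (fun i => ContinuousLinearMap.proj i.succ)

lemma shiftL_apply (A : Jet n (k+1)) : shiftL n k A = fun i => A i.succ := rfl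

lemma trunc_trunc {a b c : ℕ} (h1 : a ≤ b) (h2 : b ≤ c) (h3 : a ≤ c) (A : Jet n c) :
    trunc h1 (trunc h2 A) = trunc h3 A := by
  funext i; rfl

lemma DT_eq {W : Type*} [NormedAddCommGroup W] [NormedSpace ℝ W]
    (F : Jet n k → W) (A : Jet n (k+1)) :
    DT F A = fderiv ℝ F (trunc (Nat.le_succ k) A) (fun i => A i.succ) := by
  have h1 : ∀ (j : Fin (k+1)),
      pd F (j : ℕ) (trunc (Nat.le_succ k) A) (A j.succ)
        = fderiv ℝ F (trunc (Nat.le_succ k) A) (Pi.single j (A j.succ)) := by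
    intro j
    rw [pd, dif_pos j.isLt]
    simp only [ContinuousLinearMap.comp_apply, ContinuousLinearMap.pi_apply, Fin.eta]
    congr 1
    funext i
    rcases eq_or_ne i j with h | h
    · subst h; simp
    · simp [Pi.single_apply, h]
  rw [DT]
  simp_rw [h1]
  rw [← map_sum]
  congr 1
  exact Finset.univ_sum_single _


variable {W : Type*} [NormedAddCommGroup W] [NormedSpace ℝ W]

lemma DT_zero_fn {F : Jet n k → W} (h : ∀ B, F B = 0) (A : Jet n (k+1)) : DT F A = 0 := by
  have : F = fun _ => 0 := funext h
  subst this
  rw [DT_eq]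
  simp

lemma DT_add {F G : Jet n k → W} (hF : Differentiable ℝ F) (hG : Differentiable ℝ G)
    (A : Jet n (k+1)) : DT (fun B => F B + G B) A = DT F A + DT G A := by
  simp only [DT_eq]
  rw [fderiv_fun_add (hF _) (hG _)]
  rfl

lemma DT_smul (c : ℝ) {F : Jet n k → W} (hF : Differentiable ℝ F)
    (A : Jet n (k+1)) : DT (fun B => c • F B) A = c • DT F A := by
  simp only [DT_eq]
  rw [fderiv_fun_const_smul (hF _)]
  rfl

lemma contDiff_DT {F : Jet n k → W} (hF : ContDiff ℝ (⊤ : ℕ∞) F) :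
    ContDiff ℝ (⊤ : ℕ∞) (DT F : Jet n (k+1) → W) := by
  have : (DT F : Jet n (k+1) → W)
      = fun A => fderiv ℝ F (truncL n (Nat.le_succ k) A) (shiftL n k A) := by
    funext A; rw [DT_eq]; rfl
  rw [this]
  exact ((hF.fderiv_right (by simp)).comp (truncL n _).contDiff).clm_apply (shiftL n k).contDiff

lemma DT_comp_trunc {m M : ℕ} (h : m ≤ M) {F : Jet n m → W} (hF : Differentiable ℝ F)
    (B : Jet n (M+1)) :
    DT (fun C : Jet n M => F (trunc h C)) B
      = DT F (trunc (by omega : m + 1 ≤ M + 1) B) := by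
  have hc : (fun C : Jet n M => F (trunc h C)) = F ∘ (truncL n h) := rfl
  rw [DT_eq, DT_eq, hc]
  rw [fderiv_comp _ (hF _) (truncL n h).differentiableAt]
  rw [(truncL n h).fderiv]
  simp only [ContinuousLinearMap.coe_comp', Function.comp_apply]
  rfl

/-! ### component lemmas -/

lemma comp'_of_lt {μ : OneForm n k} {A : Jet n k} {r : ℕ} (h : r < k + 1) :
    comp' μ A r = μ A ⟨r, h⟩ := dif_pos h

lemma comp'_zero_of_ge {μ : OneForm n k} {A : Jet n k} {r : ℕ} (h : k + 1 ≤ r) :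
    comp' μ A r = 0 := dif_neg (by omega)

lemma comp'_add (μ ν : OneForm n k) (A : Jet n k) (r : ℕ) :
    comp' (μ + ν) A r = comp' μ A r + comp' ν A r := by
  unfold comp'; split <;> simp [Pi.add_apply]

lemma comp'_smul (c : ℝ) (μ : OneForm n k) (A : Jet n k) (r : ℕ) :
    comp' (c • μ) A r = c • comp' μ A r := by
  unfold comp'; split <;> simp [Pi.smul_apply]

lemma comp'_VS (μ : OneForm n k) (A : Jet n k) (r : ℕ) :
    comp' (VS μ) A r = (((r + 1 : ℕ)) : ℝ) • comp' μ A (r + 1) := by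
  rcases lt_or_ge r (k+1) with h | h
  · rw [comp'_of_lt h]; rfl
  · rw [comp'_zero_of_ge h, comp'_zero_of_ge (by omega), smul_zero]

lemma comp'_dT_succ (μ : OneForm n k) (A : Jet n (k+1)) (s : ℕ) :
    comp' (dT μ) A (s+1)
      = DT (fun B => comp' μ B (s+1)) A + comp' μ (trunc (Nat.le_succ k) A) s := by
  rcases lt_or_ge (s+1) (k+2) with h | h
  · rw [comp'_of_lt h]; rfl
  · rw [comp'_zero_of_ge (by omega),
      DT_zero_fn (fun B => comp'_zero_of_ge (by omega)) A,
      comp'_zero_of_ge (by omega), add_zero]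

lemma comp'_dT_zero (μ : OneForm n k) (A : Jet n (k+1)) :
    comp' (dT μ) A 0 = DT (fun B => comp' μ B 0) A := by
  rw [comp'_of_lt (by omega)]
  show DT _ A + 0 = _
  rw [add_zero]

/-- Inclusion of a form of order `k` as a form of order `k+1`. -/
def incl (μ : OneForm n k) : OneForm n (k+1) :=
  fun A r => comp' μ (trunc (Nat.le_succ k) A) (r : ℕ)

lemma comp'_incl (μ : OneForm n k) (A : Jet n (k+1)) (r : ℕ) :
    comp' (incl μ) A r = comp' μ (trunc (Nat.le_succ k) A) r := by
  rcases lt_or_ge r (k+2) with h | h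
  · rw [comp'_of_lt h]; rfl
  · rw [comp'_zero_of_ge (by omega), comp'_zero_of_ge (by omega)]

/-! ### smoothness -/

/-- Smoothness of a one-form. -/
def Sm (μ : OneForm n k) : Prop := ContDiff ℝ (⊤ : ℕ∞) μ

lemma Sm.smooth_comp' {μ : OneForm n k} (hμ : Sm μ) (r : ℕ) :
    ContDiff ℝ (⊤ : ℕ∞) (fun A => comp' μ A r) := by
  unfold _root_.comp'
  split
  · exact contDiff_pi.1 hμ _
  · exact contDiff_const

lemma Sm.diff_comp' {μ : OneForm n k} (hμ : Sm μ) (r : ℕ) :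
    Differentiable ℝ (fun A => comp' μ A r) :=
  (hμ.smooth_comp' r).differentiable (by simp)

lemma Sm.add {μ ν : OneForm n k} (hμ : Sm μ) (hν : Sm ν) : Sm (μ + ν) :=
  ContDiff.add hμ hν

lemma Sm.smul (c : ℝ) {μ : OneForm n k} (hμ : Sm μ) : Sm (c • μ) :=
  ContDiff.const_smul c hμ

lemma Sm.vs {μ : OneForm n k} (hμ : Sm μ) : Sm (VS μ) := by
  apply contDiff_pi.2
  intro r
  exact (hμ.smooth_comp' ((r : ℕ) + 1)).const_smul _

lemma Sm.vs_iter {μ : OneForm n k} (hμ : Sm μ) (j : ℕ) : Sm (VS^[j] μ) := by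
  induction j with
  | zero => exact hμ
  | succ i ih => rw [Function.iterate_succ_apply']; exact ih.vs

lemma Sm.incl {μ : OneForm n k} (hμ : Sm μ) : Sm (CartanAux.incl μ) := by
  apply contDiff_pi.2
  intro r
  exact (hμ.smooth_comp' (r : ℕ)).comp (truncL n (Nat.le_succ k)).contDiff

lemma Sm.dT {μ : OneForm n k} (hμ : Sm μ) : Sm (_root_.dT μ) := by
  apply contDiff_pi.2
  intro r
  unfold _root_.dT
  apply ContDiff.add
  · exact contDiff_DT (hμ.smooth_comp' (r : ℕ))
  · rcases hr : (r : ℕ) with _ | s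
    · exact contDiff_const
    · exact (hμ.smooth_comp' s).comp (truncL n (Nat.le_succ k)).contDiff

lemma Sm.dTiter {μ : OneForm n k} (hμ : Sm μ) (i : ℕ) : Sm (_root_.dTiter i μ) := by
  induction i with
  | zero => exact hμ
  | succ i ih => exact ih.dT


/-! ### form-level algebra -/

lemma form_ext {μ ν : OneForm n k} (h : ∀ A r, comp' μ A r = comp' ν A r) : μ = ν := by
  funext A r
  have := h A (r : ℕ)
  rw [comp'_of_lt r.isLt, comp'_of_lt r.isLt] at this
  exact this

lemma VS_add (μ ν : OneForm n k) : VS (μ + ν) = VS μ + VS ν := by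
  apply form_ext
  intro A r
  rw [comp'_add, comp'_VS, comp'_VS, comp'_VS, comp'_add, smul_add]

lemma VS_smul (c : ℝ) (μ : OneForm n k) : VS (c • μ) = c • VS μ := by
  apply form_ext
  intro A r
  rw [comp'_smul, comp'_VS, comp'_VS, comp'_smul, smul_comm]

lemma VS_incl (μ : OneForm n k) : VS (incl μ) = incl (VS μ) := by
  apply form_ext
  intro A r
  rw [comp'_VS, comp'_incl, comp'_incl, comp'_VS]

lemma dT_add {μ ν : OneForm n k} (hμ : Sm μ) (hν : Sm ν) :
    dT (μ + ν) = dT μ + dT ν := by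
  apply form_ext
  intro A r
  rw [comp'_add]
  rcases r with _ | s
  · rw [comp'_dT_zero, comp'_dT_zero, comp'_dT_zero]
    have : (fun B => comp' (μ + ν) B 0) = fun B => comp' μ B 0 + comp' ν B 0 := by
      funext B; rw [comp'_add]
    rw [this, DT_add (hμ.diff_comp' 0) (hν.diff_comp' 0)]
  · rw [comp'_dT_succ, comp'_dT_succ, comp'_dT_succ]
    have : (fun B => comp' (μ + ν) B (s+1)) = fun B => comp' μ B (s+1) + comp' ν B (s+1) := by
      funext B; rw [comp'_add]
    rw [this, DT_add (hμ.diff_comp' (s+1)) (hν.diff_comp' (s+1)), comp'_add]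
    abel

lemma dT_smul (c : ℝ) {μ : OneForm n k} (hμ : Sm μ) :
    dT (c • μ) = c • dT μ := by
  apply form_ext
  intro A r
  rw [comp'_smul]
  rcases r with _ | s
  · rw [comp'_dT_zero, comp'_dT_zero]
    have : (fun B => comp' (c • μ) B 0) = fun B => c • comp' μ B 0 := by
      funext B; rw [comp'_smul]
    rw [this, DT_smul c (hμ.diff_comp' 0)]
  · rw [comp'_dT_succ, comp'_dT_succ]
    have : (fun B => comp' (c • μ) B (s+1)) = fun B => c • comp' μ B (s+1) := by
      funext B; rw [comp'_smul]
    rw [this, DT_smul c (hμ.diff_comp' (s+1)), comp'_smul, smul_add]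

lemma dTiter_add {μ ν : OneForm n k} (hμ : Sm μ) (hν : Sm ν) (i : ℕ) :
    dTiter i (μ + ν) = dTiter i μ + dTiter i ν := by
  induction i with
  | zero => rfl
  | succ i ih =>
    show dT (dTiter i (μ + ν)) = dT (dTiter i μ) + dT (dTiter i ν)
    rw [ih, dT_add (hμ.dTiter i) (hν.dTiter i)]

lemma dTiter_smul (c : ℝ) {μ : OneForm n k} (hμ : Sm μ) (i : ℕ) :
    dTiter i (c • μ) = c • dTiter i μ := by
  induction i with
  | zero => rfl
  | succ i ih =>
    show dT (dTiter i (c • μ)) = c • dT (dTiter i μ)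
    rw [ih, dT_smul c (hμ.dTiter i)]

/-- The fundamental commutation relation `S ∘ d_T = d_T ∘ S + id`. -/
lemma VS_dT_comm {μ : OneForm n k} (hμ : Sm μ) :
    VS (dT μ) = dT (VS μ) + incl μ := by
  apply form_ext
  intro A r
  rw [comp'_add, comp'_VS, comp'_dT_succ, comp'_incl]
  have hVS : (fun B => comp' (VS μ) B r) = fun B => (((r+1:ℕ)):ℝ) • comp' μ B (r+1) := by
    funext B; rw [comp'_VS]
  rcases r with _ | s
  · rw [comp'_dT_zero, hVS, DT_smul _ (hμ.diff_comp' 1), smul_add]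
    norm_num
  · rw [comp'_dT_succ, hVS, DT_smul _ (hμ.diff_comp' (s+2)), comp'_VS, smul_add]
    have hD : (fun B : Jet n k => comp' μ B (s+1+1)) = (fun B => comp' μ B (s+2)) := rfl
    rw [hD]
    push_cast
    module

/-! ### vanishing lemmas -/

lemma comp'_VS_iter_vanish (μ : OneForm n k) (j : ℕ) :
    ∀ (A : Jet n k) (r : ℕ), k < r + j → comp' (VS^[j] μ) A r = 0 := by
  induction j with
  | zero => intro A r h; exact comp'_zero_of_ge (by omega)
  | succ j ih =>
    intro A r h
    rw [Function.iterate_succ_apply', comp'_VS, ih A (r+1) (by omega), smul_zero]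

lemma comp'_dT_vanish {μ : OneForm n k} {t : ℕ}
    (h : ∀ A r, t ≤ r → comp' μ A r = 0) :
    ∀ (A : Jet n (k+1)) (r : ℕ), t + 1 ≤ r → comp' (dT μ) A r = 0 := by
  intro A r hr
  rcases r with _ | s
  · omega
  · rw [comp'_dT_succ, DT_zero_fn (fun B => h B (s+1) (by omega)) A,
      h _ s (by omega), add_zero]

lemma comp'_dTiter_vanish {μ : OneForm n k} {t : ℕ}
    (h : ∀ A r, t ≤ r → comp' μ A r = 0) (i : ℕ) :
    ∀ (A : Jet n (k+i)) (r : ℕ), t + i ≤ r → comp' (dTiter i μ) A r = 0 := by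
  induction i with
  | zero => intro A r hr; exact h A r (by omega)
  | succ i ih =>
    intro A r hr
    exact comp'_dT_vanish (t := t + i) ih A r (by omega)

lemma comp'_dT_allzero {μ : OneForm n k}
    (h : ∀ A r, comp' μ A r = 0) :
    ∀ (A : Jet n (k+1)) (r : ℕ), comp' (dT μ) A r = 0 := by
  intro A r
  rcases r with _ | s
  · rw [comp'_dT_zero, DT_zero_fn (fun B => h B 0) A]
  · rw [comp'_dT_succ, DT_zero_fn (fun B => h B (s+1)) A, h _ s, add_zero]

lemma comp'_dTiter_allzero {μ : OneForm n k}
    (h : ∀ A r, comp' μ A r = 0) (i : ℕ) :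
    ∀ (A : Jet n (k+i)) (r : ℕ), comp' (dTiter i μ) A r = 0 := by
  induction i with
  | zero => exact h
  | succ i ih => exact comp'_dT_allzero ih

/-! ### HEq bridges -/

lemma dT_congr_heq {a b : ℕ} (h : a = b) {x : OneForm n a} {y : OneForm n b}
    (hxy : HEq x y) : HEq (dT x) (dT y) := by
  subst h
  rw [eq_of_heq hxy]

lemma dTiter_dT_heq (ν : OneForm n k) :
    ∀ i, HEq (dTiter i (dT ν)) (dTiter (i+1) ν) := by
  intro i
  induction i with
  | zero => exact HEq.rfl
  | succ i ih =>
    show HEq (dT (dTiter i (dT ν))) (dT (dTiter (i+1) ν))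
    exact dT_congr_heq (by omega) ih

lemma compAt_congr_heq {a b M : ℕ} (h : a = b) {x : OneForm n a} {y : OneForm n b}
    (hxy : HEq x y) (A : Jet n M) (r : ℕ) : compAt x A r = compAt y A r := by
  subst h
  rw [eq_of_heq hxy]


/-! ### incl commutes with dTiter -/

lemma comp'_dTiter_incl {ν : OneForm n k} (hν : Sm ν) :
    ∀ (i : ℕ) (B : Jet n (k+1+i)) (r : ℕ),
      comp' (dTiter i (incl ν)) B r
        = comp' (dTiter i ν) (trunc (by omega) B) r := by
  intro i
  induction i with
  | zero =>
    intro B r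
    exact comp'_incl ν B r
  | succ i ih =>
    intro B r
    have h1 : k + i ≤ k + 1 + i := by omega
    have hfun : (fun C : Jet n (k+1+i) => comp' (dTiter i (incl ν)) C r)
        = fun C => (fun D : Jet n (k+i) => comp' (dTiter i ν) D r)
            (trunc h1 C) := by
      funext C; exact ih C r
    have hdiff : Differentiable ℝ (fun D : Jet n (k+i) => comp' (dTiter i ν) D r) :=
      (hν.dTiter i).diff_comp' r
    have hDT := DT_comp_trunc (n := n) h1
      (F := fun D : Jet n (k+i) => comp' (dTiter i ν) D r) hdiff B
    rcases r with _ | s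
    · show comp' (dT (dTiter i (incl ν))) B 0
        = comp' (dT (dTiter i ν)) (trunc (by omega) B) 0
      rw [comp'_dT_zero, comp'_dT_zero, hfun, hDT]
    · show comp' (dT (dTiter i (incl ν))) B (s+1)
        = comp' (dT (dTiter i ν)) (trunc (by omega) B) (s+1)
      rw [comp'_dT_succ, comp'_dT_succ, hfun, hDT, ih _ s]
      rfl


/-! ### compAt lemmas -/

lemma compAt_eq {m M : ℕ} (h : m ≤ M) (μ : OneForm n m) (A : Jet n M) (r : ℕ) :
    compAt μ A r = comp' μ (trunc h A) r := dif_pos h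

lemma compAt_add {m M : ℕ} (μ ν : OneForm n m) (A : Jet n M) (r : ℕ) :
    compAt (μ + ν) A r = compAt μ A r + compAt ν A r := by
  unfold compAt
  split
  · rw [comp'_add]
  · rw [add_zero]

lemma compAt_smul {m M : ℕ} (c : ℝ) (μ : OneForm n m) (A : Jet n M) (r : ℕ) :
    compAt (c • μ) A r = c • compAt μ A r := by
  unfold compAt
  split
  · rw [comp'_smul]
  · rw [smul_zero]

/-! ### the iterated commutation relation -/

lemma vsiter_dT {lam : OneForm n k} (hlam : Sm lam) (i : ℕ) :
    VS^[i+1] (dT lam)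
      = dT (VS^[i+1] lam) + (((i+1 : ℕ)) : ℝ) • incl (VS^[i] lam) := by
  induction i with
  | zero =>
    simp only [Nat.zero_add, Function.iterate_one, Function.iterate_zero, id_eq,
      Nat.cast_one, one_smul]
    exact VS_dT_comm hlam
  | succ i ih =>
    rw [Function.iterate_succ_apply' VS (i+1) (dT lam), ih, VS_add, VS_smul, VS_incl,
      VS_dT_comm (hlam.vs_iter (i+1)),
      ← Function.iterate_succ_apply' VS (i+1) lam,
      ← Function.iterate_succ_apply' VS i lam]
    push_cast
    module

end CartanAux
end


noncomputable section

open CartanAux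

/-- The Cartan operator `𝕊(λ) = ∑_{j=1}^{k} ((−1)^{j−1}/j!) d_T^{j−1}(S^jλ)`, a 1-form of
order `2k−1` (each summand `d_T^{j−1}(S^jλ)` has order `k+j−1` and is regarded as a 1-form
of order `2k−1` via truncation). -/
def Cartan {n k : ℕ} (lam : OneForm n k) : OneForm n (2 * k - 1) :=
  fun A r => ∑ j ∈ Finset.Icc 1 k,
    ((-1 : ℝ) ^ (j - 1) / (j.factorial : ℝ)) • compAt (dTiter (j - 1) (VS^[j] lam)) A r

/-- **Properties of the Cartan operator** (coordinate model): for a smooth 1-form `λ` of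
order `k ≥ 1`:
(i) all components of `𝕊λ` of index `≥ k` vanish, i.e. `𝕊λ` is semibasic of order `k−1`;
(ii) applying the Cartan operator of order `k+1` to `d_Tλ` recovers `λ`:
`𝕊(d_Tλ) = λ` as 1-forms of order `2k+1`. -/
theorem cartan_operator_properties (n k : ℕ) (hn : 1 ≤ n) (hk : 1 ≤ k)
    (lam : OneForm n k) (hlam : ContDiff ℝ (⊤ : ℕ∞) lam) :
    (∀ (A : Jet n (2 * k - 1)) (r : ℕ), k ≤ r → comp' (Cartan lam) A r = 0) ∧
      (∀ (A : Jet n (2 * (k + 1) - 1)) (r : ℕ),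
        comp' (Cartan (dT lam)) A r = compAt lam A r) := by
  have hlam' : Sm lam := hlam
  constructor
  · -- part (i)
    intro A r hr
    rcases lt_or_ge r (2*k-1+1) with hlt | hge
    · rw [comp'_of_lt hlt]
      have hC : Cartan lam A ⟨r, hlt⟩
          = ∑ j ∈ Finset.Icc 1 k,
            ((-1:ℝ)^(j-1)/(j.factorial:ℝ)) • compAt (dTiter (j-1) (VS^[j] lam)) A r := rfl
      rw [hC]
      apply Finset.sum_eq_zero
      intro j hj
      rw [Finset.mem_Icc] at hj
      have hord : k + (j-1) ≤ 2*k-1 := by omega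
      rw [compAt_eq hord]
      have hvan : ∀ (A' : Jet n k) (r' : ℕ), k+1-j ≤ r' → comp' (VS^[j] lam) A' r' = 0 :=
        fun A' r' h' => comp'_VS_iter_vanish lam j A' r' (by omega)
      rw [comp'_dTiter_vanish hvan (j-1) _ r (by omega), smul_zero]
    · exact comp'_zero_of_ge (by omega)
  · -- part (ii)
    intro A r
    rcases lt_or_ge r (2*(k+1)-1+1) with hlt | hge
    · rw [comp'_of_lt hlt]
      have hC : Cartan (dT lam) A ⟨r, hlt⟩
          = ∑ j ∈ Finset.Icc 1 (k+1),
            ((-1:ℝ)^(j-1)/(j.factorial:ℝ)) • compAt (dTiter (j-1) (VS^[j] (dT lam))) A r := rfl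
      rw [hC]
      have hterm : ∀ j ∈ Finset.Icc 1 (k+1),
          ((-1:ℝ)^(j-1)/(j.factorial:ℝ)) • compAt (dTiter (j-1) (VS^[j] (dT lam))) A r
            = ((-1:ℝ)^(j-1)/((j-1).factorial:ℝ)) • compAt (dTiter (j-1) (VS^[j-1] lam)) A r
              - ((-1:ℝ)^j/(j.factorial:ℝ)) • compAt (dTiter j (VS^[j] lam)) A r := by
        intro j hj
        rw [Finset.mem_Icc] at hj
        obtain ⟨i, rfl⟩ : ∃ i, j = i + 1 := ⟨j - 1, by omega⟩
        have hik : i ≤ k := by omega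
        show ((-1:ℝ)^i/(((i+1).factorial):ℝ)) • compAt (dTiter i (VS^[i+1] (dT lam))) A r
          = ((-1:ℝ)^i/((i.factorial):ℝ)) • compAt (dTiter i (VS^[i] lam)) A r
            - ((-1:ℝ)^(i+1)/(((i+1).factorial):ℝ)) • compAt (dTiter (i+1) (VS^[i+1] lam)) A r
        rw [vsiter_dT hlam' i]
        rw [dTiter_add ((hlam'.vs_iter (i+1)).dT) (Sm.smul _ ((hlam'.vs_iter i).incl)) i]
        rw [dTiter_smul _ ((hlam'.vs_iter i).incl) i]
        rw [compAt_add, compAt_smul]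
        have h1 : compAt (dTiter i (dT (VS^[i+1] lam))) A r
            = compAt (dTiter (i+1) (VS^[i+1] lam)) A r :=
          compAt_congr_heq (by omega) (dTiter_dT_heq (VS^[i+1] lam) i) A r
        have h2 : compAt (dTiter i (incl (VS^[i] lam))) A r
            = compAt (dTiter i (VS^[i] lam)) A r := by
          rw [compAt_eq (by omega : (k+1)+i ≤ 2*(k+1)-1),
            comp'_dTiter_incl (hlam'.vs_iter i) i _ r,
            compAt_eq (by omega : k+i ≤ 2*(k+1)-1)]
          rfl
        rw [h1, h2]
        have c2 : ((-1:ℝ))^i/(((i+1).factorial):ℝ) * (((i+1:ℕ)):ℝ)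
            = (-1)^i/((i.factorial):ℝ) := by
          rw [Nat.factorial_succ]
          have h0 : ((i.factorial : ℝ)) ≠ 0 := Nat.cast_ne_zero.2 (Nat.factorial_ne_zero i)
          have h1 : ((i : ℝ)) + 1 ≠ 0 := by positivity
          push_cast
          field_simp
        have c1 : ((-1:ℝ))^i/(((i+1).factorial):ℝ)
            = -((-1)^(i+1)/(((i+1).factorial):ℝ)) := by
          rw [pow_succ]
          ring
        rw [smul_add, smul_smul, c2, c1, neg_smul]
        abel
      rw [Finset.sum_congr rfl hterm, ← Finset.Ico_add_one_right_eq_Icc,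
        Finset.sum_Ico_eq_sum_range]
      have hconv : ∀ i,
          ((-1:ℝ)^(1+i-1)/((1+i-1).factorial:ℝ)) • compAt (dTiter (1+i-1) (VS^[1+i-1] lam)) A r
            - ((-1:ℝ)^(1+i)/((1+i).factorial:ℝ)) • compAt (dTiter (1+i) (VS^[1+i] lam)) A r
          = (fun l => ((-1:ℝ)^l/(l.factorial:ℝ)) • compAt (dTiter l (VS^[l] lam)) A r) i
            - (fun l => ((-1:ℝ)^l/(l.factorial:ℝ)) • compAt (dTiter l (VS^[l] lam)) A r) (i+1) := by
        intro i
        rw [show 1+i-1 = i by omega, show 1+i = i+1 by omega]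
      rw [Finset.sum_congr rfl (fun i _ => hconv i), Finset.sum_range_sub']
      have hzero : compAt (dTiter (k+1) (VS^[k+1] lam)) A r = 0 := by
        rw [compAt_eq (by omega : k+(k+1) ≤ 2*(k+1)-1)]
        exact comp'_dTiter_allzero
          (fun A' r' => comp'_VS_iter_vanish lam (k+1) A' r' (by omega)) (k+1) _ r
      have hfin : (fun l => ((-1:ℝ)^l/((l.factorial):ℝ)) • compAt (dTiter l (VS^[l] lam)) A r) 0
          - (fun l => ((-1:ℝ)^l/((l.factorial):ℝ)) • compAt (dTiter l (VS^[l] lam)) A r) (k+1)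
          = compAt lam A r := by
        simp only
        rw [hzero, smul_zero, sub_zero, pow_zero, Nat.factorial_zero, Nat.cast_one]
        rw [show ((1:ℝ)/1) = 1 by norm_num, one_smul]
        rfl
      exact hfin
    · rw [comp'_zero_of_ge (by omega), compAt_eq (by omega : k ≤ 2*(k+1)-1),
        comp'_zero_of_ge (by omega)]


end
end

section
/- (Relations among the operators 𝔻_r; coordinate model.) For a 1-form λ of order k and 0 ≤ r ≤ k, define 𝔻_r(λ) := ∑_{j=r}^{k} ((−1)^{j+r} / j!) · d_T^{j−r}(S^jλ), a 1-form of order 2k−r (each summand regarded as a 1-form of order 2k−r), and set 𝔻_{k+1}(λ) := 0. Then: (i) for 1 ≤ r ≤ k, 𝔻_{r−1}(λ) = (1/(r−1)!)·S^{r−1}λ − d_T(𝔻_r(λ)) (as 1-forms of order 2k−r+1); (ii) for 0 ≤ r ≤ k, S(𝔻_r(λ)) = r·𝔻_{r+1}(λ) (as 1-forms of order 2k−r). In particular S(𝔻_0(λ)) = 0 and S^k(𝔻_1(λ)) = 0. -/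
noncomputable section

/-- The operator `𝔻_r(λ) = ∑_{j=r}^{k} ((−1)^{j+r}/j!) d_T^{j−r}(S^jλ)`, a 1-form of order
`2k−r` (each summand `d_T^{j−r}(S^jλ)` has order `k+j−r` and is regarded as a 1-form of
order `2k−r` via truncation).  For `r = k+1` the sum is empty, i.e. `𝔻_{k+1}(λ) = 0`. -/
def Dop {n k : ℕ} (r : ℕ) (lam : OneForm n k) : OneForm n (2 * k - r) :=
  fun A i => ∑ j ∈ Finset.Icc r k,
    ((-1 : ℝ) ^ (j + r) / (j.factorial : ℝ)) • compAt (dTiter (j - r) (VS^[j] lam)) A i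


namespace DopAux

open Finset

variable {n : ℕ}

local notation "E'" => EuclideanSpace ℝ (Fin n)
local notation "V'" => (EuclideanSpace ℝ (Fin n) →L[ℝ] ℝ)

/-- truncation as a continuous linear map -/
def truncCLM {k m : ℕ} (h : m ≤ k) : Jet n k →L[ℝ] Jet n m :=
  ContinuousLinearMap.pi
    (fun i : Fin (m+1) => ContinuousLinearMap.proj (⟨i.1, by omega⟩ : Fin (k+1)))

lemma trunc_eq_clm {k m : ℕ} (h : m ≤ k) (A : Jet n k) : trunc h A = truncCLM h A := rfl

lemma comp'_of_ge {k : ℕ} (μ : OneForm n k) (A : Jet n k) {r : ℕ} (h : k + 1 ≤ r) :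
    comp' μ A r = 0 := dif_neg (by omega)

lemma compAt_eq {k m : ℕ} (μ : OneForm n m) (h : m ≤ k) (A : Jet n k) (r : ℕ) :
    compAt μ A r = comp' μ (trunc h A) r := dif_pos h

lemma compAt_self {m : ℕ} (μ : OneForm n m) (A : Jet n m) (r : ℕ) :
    compAt μ A r = comp' μ A r := dif_pos le_rfl

lemma compAt_trunc {m K1 K2 : ℕ} (μ : OneForm n m) (h1 : m ≤ K1) (h2 : K1 ≤ K2)
    (A : Jet n K2) (r : ℕ) : compAt μ (trunc h2 A) r = compAt μ A r := by
  rw [compAt_eq μ h1, compAt_eq μ (h1.trans h2)]; rfl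

lemma comp'_VS {k : ℕ} (μ : OneForm n k) (A : Jet n k) (r : ℕ) :
    comp' (VS μ) A r = ((r : ℝ) + 1) • comp' μ A (r + 1) := by
  unfold comp' VS
  by_cases h : r < k + 1
  · rw [dif_pos h]; push_cast; rfl
  · rw [dif_neg h, dif_neg (by omega)]
    simp

lemma comp'_dT_zero {k : ℕ} (μ : OneForm n k) (A : Jet n (k+1)) :
    comp' (dT μ) A 0 = DT (fun B => comp' μ B 0) A := by
  have e : comp' (dT μ) A 0 = dT μ A ⟨0, by omega⟩ := dif_pos _
  rw [e]; exact add_zero _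

lemma comp'_dT_succ {k : ℕ} (μ : OneForm n k) (A : Jet n (k+1)) {s : ℕ} (h : s + 1 < k + 2) :
    comp' (dT μ) A (s+1) =
      DT (fun B => comp' μ B (s+1)) A + comp' μ (trunc (Nat.le_succ k) A) s := by
  have e : comp' (dT μ) A (s+1) = dT μ A ⟨s+1, h⟩ := dif_pos _
  rw [e]; rfl

lemma pd_const_zero {M : ℕ} {W : Type*} [NormedAddCommGroup W] [NormedSpace ℝ W]
    (r : ℕ) (A : Fin M → E') : pd (fun _ => (0:W)) r A = 0 := by
  unfold pd
  split
  · rw [fderiv_const_apply]; exact ContinuousLinearMap.zero_comp _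
  · rfl

lemma DT_const_zero {k : ℕ} {W : Type*} [NormedAddCommGroup W] [NormedSpace ℝ W]
    (A : Jet n (k+1)) : DT (fun _ : Jet n k => (0:W)) A = 0 := by
  unfold DT
  simp [pd_const_zero]

lemma DT_congr {k : ℕ} {W : Type*} [NormedAddCommGroup W] [NormedSpace ℝ W]
    {F G : Jet n k → W} (h : ∀ B, F B = G B) (A : Jet n (k+1)) : DT F A = DT G A := by
  have : F = G := funext h
  rw [this]

lemma pd_sum_smul {M : ℕ} {W : Type*} [NormedAddCommGroup W] [NormedSpace ℝ W]
    {ι : Type*} (s : Finset ι) (c : ι → ℝ) (F : ι → (Fin M → E') → W)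
    (A : Fin M → E') (hF : ∀ j ∈ s, DifferentiableAt ℝ (F j) A) (r : ℕ) :
    pd (fun B => ∑ j ∈ s, c j • F j B) r A = ∑ j ∈ s, c j • pd (F j) r A := by
  unfold pd
  split
  · rw [fderiv_fun_sum (A := fun j B => c j • F j B) (fun j hj => ((hF j hj).const_smul (c j))),
      Finset.sum_congr rfl (fun j hj => fderiv_fun_const_smul (hF j hj) (c j))]
    ext v
    simp only [ContinuousLinearMap.coe_comp', Function.comp_apply,
      ContinuousLinearMap.coe_sum', Finset.sum_apply, ContinuousLinearMap.coe_smul',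
      Pi.smul_apply]
  · simp

lemma pd_comp_trunc {m K : ℕ} (h : m ≤ K) {W : Type*} [NormedAddCommGroup W]
    [NormedSpace ℝ W] (F : Jet n m → W) (hF : Differentiable ℝ F) (j : ℕ) (A : Jet n K) :
    pd (fun B => F (trunc h B)) j A = if j < m + 1 then pd F j (trunc h A) else 0 := by
  have hc : (fun B : Jet n K => F (trunc h B)) = F ∘ (truncCLM (n := n) h) := rfl
  unfold pd
  by_cases hK : j < K + 1
  · rw [dif_pos hK, hc, fderiv_comp A (hF.differentiableAt) ((truncCLM h).differentiableAt),
      (truncCLM (n := n) h).fderiv]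
    by_cases hm : j < m + 1
    · rw [if_pos hm, dif_pos hm, ContinuousLinearMap.comp_assoc]
      congr 1
      ext v i
      simp only [ContinuousLinearMap.coe_comp', Function.comp_apply,
        ContinuousLinearMap.pi_apply, Pi.single_apply, truncCLM,
        ContinuousLinearMap.proj_apply]
      have hiff : ((⟨(i:ℕ), by omega⟩ : Fin (K+1)) = ⟨j, hK⟩) ↔ ((i : Fin (m+1)) = ⟨j, hm⟩) := by
        constructor <;> (intro hh; rw [Fin.ext_iff] at *; simpa using hh)
      by_cases hq : (i : Fin (m+1)) = ⟨j, hm⟩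
      · rw [if_pos (hiff.2 hq), if_pos hq]
      · rw [if_neg (fun hh => hq (hiff.1 hh)), if_neg hq]
    · rw [if_neg hm, ContinuousLinearMap.comp_assoc]
      have : (truncCLM (n := n) h).comp
          (ContinuousLinearMap.pi (Pi.single (⟨j, hK⟩ : Fin (K+1)) (ContinuousLinearMap.id ℝ E'))) = 0 := by
        ext v i
        simp only [ContinuousLinearMap.coe_comp', Function.comp_apply, truncCLM,
          ContinuousLinearMap.pi_apply, ContinuousLinearMap.proj_apply, Pi.single_apply,
          ContinuousLinearMap.zero_apply]
        rw [if_neg (by simp only [Fin.ext_iff]; omega)]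
        rfl
      rw [this, ContinuousLinearMap.comp_zero]
  · rw [dif_neg hK, if_neg (by omega)]

lemma DT_sum_smul {k : ℕ} {W : Type*} [NormedAddCommGroup W] [NormedSpace ℝ W]
    {ι : Type*} (s : Finset ι) (c : ι → ℝ) (F : ι → Jet n k → W)
    (hF : ∀ j ∈ s, Differentiable ℝ (F j)) (A : Jet n (k+1)) :
    DT (fun B => ∑ j ∈ s, c j • F j B) A = ∑ j ∈ s, c j • DT (F j) A := by
  unfold DT
  have step : ∀ j : Fin (k+1),
      (pd (fun B => ∑ i ∈ s, c i • F i B) (j : ℕ) (trunc (Nat.le_succ k) A)) (A j.succ)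
      = ∑ i ∈ s, c i • (pd (F i) (j : ℕ) (trunc (Nat.le_succ k) A)) (A j.succ) := by
    intro j
    rw [pd_sum_smul s c F _ (fun i hi => (hF i hi).differentiableAt)]
    simp
  rw [Finset.sum_congr rfl (fun j _ => step j), Finset.sum_comm]
  refine Finset.sum_congr rfl (fun i _ => ?_)
  rw [Finset.smul_sum]

lemma DT_comp_trunc {m K : ℕ} (h : m ≤ K) {W : Type*} [NormedAddCommGroup W]
    [NormedSpace ℝ W] (F : Jet n m → W) (hF : Differentiable ℝ F) (A : Jet n (K+1)) :
    DT (fun B => F (trunc h B)) A = DT F (trunc (Nat.succ_le_succ h) A) := by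
  unfold DT
  set g : ℕ → W := fun t => if ht : t < m + 1 then
      (pd F t (trunc (h.trans (Nat.le_succ K)) A)) (A ⟨t+1, by omega⟩) else 0 with hg
  have key : ∀ j : Fin (K+1),
      (pd (fun B => F (trunc h B)) (j : ℕ) (trunc (Nat.le_succ K) A)) (A j.succ) = g (j : ℕ) := by
    intro j
    by_cases hj : (j : ℕ) < m + 1
    · simp only [pd_comp_trunc h F hF, if_pos hj, hg, dif_pos hj]
      rfl
    · simp only [pd_comp_trunc h F hF, if_neg hj, hg, dif_neg hj,
        ContinuousLinearMap.zero_apply]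
  have key2 : ∀ j : Fin (m+1),
      (pd F (j : ℕ) (trunc (Nat.le_succ m) (trunc (Nat.succ_le_succ h) A)))
        ((trunc (Nat.succ_le_succ h) A) j.succ) = g (j : ℕ) := by
    intro j
    simp only [hg, dif_pos j.isLt]
    rfl
  rw [Finset.sum_congr rfl (fun j _ => key j),
    Finset.sum_congr rfl (fun j _ => key2 j),
    Fin.sum_univ_eq_sum_range g (K+1), Fin.sum_univ_eq_sum_range g (m+1)]
  symm
  apply Finset.sum_subset
  · intro x hx; simp only [Finset.mem_range] at *; omega
  · intro x _ hx
    simp only [Finset.mem_range] at hx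
    exact dif_neg (by omega)

/-- smoothness of all components of a 1-form -/
def Sm {k : ℕ} (μ : OneForm n k) : Prop :=
  ∀ r : ℕ, ContDiff ℝ (⊤ : ℕ∞) (fun B => comp' μ B r)

lemma Sm.of_contDiff {k : ℕ} {μ : OneForm n k} (h : ContDiff ℝ (⊤ : ℕ∞) μ) : Sm μ := by
  intro r
  unfold comp'
  by_cases hr : r < k + 1
  · simp only [dif_pos hr]
    exact contDiff_pi.1 h ⟨r, hr⟩
  · simp only [dif_neg hr]
    exact contDiff_const

lemma Sm.vs {k : ℕ} {μ : OneForm n k} (h : Sm μ) : Sm (VS μ) := by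
  intro r
  have : (fun B => comp' (VS μ) B r) = fun B => ((r:ℝ)+1) • comp' μ B (r+1) :=
    funext fun B => comp'_VS μ B r
  rw [this]
  exact (h (r+1)).const_smul _

lemma Sm.comp_trunc {m K : ℕ} {μ : OneForm n m} (hμ : Sm μ) (h : m ≤ K) (r : ℕ) :
    ContDiff ℝ (⊤ : ℕ∞) (fun B : Jet n K => comp' μ (trunc h B) r) :=
  (hμ r).comp (truncCLM (n := n) h).contDiff

lemma Sm.smAt {m K : ℕ} {μ : OneForm n m} (hμ : Sm μ) (h : m ≤ K) (r : ℕ) :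
    ContDiff ℝ (⊤ : ℕ∞) (fun B : Jet n K => compAt μ B r) := by
  have : (fun B : Jet n K => compAt μ B r) = fun B => comp' μ (trunc h B) r :=
    funext fun B => compAt_eq μ h B r
  rw [this]; exact hμ.comp_trunc h r

lemma contDiff_DT {k : ℕ} {W : Type*} [NormedAddCommGroup W] [NormedSpace ℝ W]
    {F : Jet n k → W} (hF : ContDiff ℝ (⊤ : ℕ∞) F) :
    ContDiff ℝ (⊤ : ℕ∞) (fun A : Jet n (k+1) => DT F A) := by
  unfold DT
  apply ContDiff.sum
  intro j _
  have h1 : ContDiff ℝ (⊤ : ℕ∞) (fun A : Jet n (k+1) => fderiv ℝ F (trunc (Nat.le_succ k) A)) := by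
    exact (hF.fderiv_right (by norm_num)).comp (truncCLM (n := n) (Nat.le_succ k)).contDiff
  set P : E' →L[ℝ] Jet n k := ContinuousLinearMap.pi
      ((Pi.single (⟨(j:ℕ), j.isLt⟩) (ContinuousLinearMap.id ℝ E') :
        ∀ _ : Fin (k+1), E' →L[ℝ] E')) with hP
  have h2 : ContDiff ℝ (⊤ : ℕ∞) (fun A : Jet n (k+1) => P (A j.succ)) := by
    exact (P.comp
      (ContinuousLinearMap.proj (R := ℝ) (φ := fun _ : Fin (k+2) => E') j.succ)).contDiff
  have : ∀ A : Jet n (k+1), (pd F (j:ℕ) (trunc (Nat.le_succ k) A)) (A j.succ) =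
      (fderiv ℝ F (trunc (Nat.le_succ k) A)) (P (A j.succ)) := by
    intro A
    unfold pd
    rw [dif_pos j.isLt]
    rfl
  simp only [this]
  exact h1.clm_apply h2

lemma Sm.dt {k : ℕ} {μ : OneForm n k} (hμ : Sm μ) : Sm (dT μ) := by
  intro r
  match r with
  | 0 =>
    have : (fun B : Jet n (k+1) => comp' (dT μ) B 0)
        = fun B => DT (fun C => comp' μ C 0) B := funext fun B => comp'_dT_zero μ B
    rw [this]
    exact contDiff_DT (hμ 0)
  | (s+1) =>
    by_cases h : s + 1 < k + 2
    · have : (fun B : Jet n (k+1) => comp' (dT μ) B (s+1))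
          = fun B => DT (fun C => comp' μ C (s+1)) B + comp' μ (trunc (Nat.le_succ k) B) s :=
        funext fun B => comp'_dT_succ μ B h
      rw [this]
      exact (contDiff_DT (hμ (s+1))).add (hμ.comp_trunc (Nat.le_succ k) s)
    · have : (fun B : Jet n (k+1) => comp' (dT μ) B (s+1)) = fun _ => 0 :=
        funext fun B => comp'_of_ge (dT μ) B (by omega)
      rw [this]
      exact contDiff_const

lemma Sm.dtIter {k : ℕ} {μ : OneForm n k} (hμ : Sm μ) (p : ℕ) : Sm (dTiter p μ) := by
  induction p with
  | zero => exact hμ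
  | succ q ih => exact ih.dt

lemma Sm.vsIter {k : ℕ} {μ : OneForm n k} (hμ : Sm μ) (p : ℕ) : Sm (VS^[p] μ) := by
  induction p with
  | zero => exact hμ
  | succ q ih => rw [Function.iterate_succ_apply']; exact ih.vs

/-- regard commutes with d_T, componentwise (Lemma A). -/
lemma lemA {m M : ℕ} (h : m ≤ M) (ν : OneForm n m) (hν : Sm ν) (A : Jet n (M+1)) (row : ℕ) :
    DT (fun B : Jet n M => compAt ν B row) A +
      (match row with
       | 0 => 0
       | (s+1) => compAt ν (trunc (Nat.le_succ M) A) s) = compAt (dT ν) A row := by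
  have h' : m + 1 ≤ M + 1 := Nat.succ_le_succ h
  have hDT : DT (fun B : Jet n M => compAt ν B row) A
      = DT (fun C : Jet n m => comp' ν C row) (trunc h' A) := by
    have e1 : (fun B : Jet n M => compAt ν B row)
        = fun B => (fun C => comp' ν C row) (trunc h B) := funext fun B => compAt_eq ν h B row
    rw [e1, DT_comp_trunc h _ ((hν row).differentiable (by norm_num)) A]
  rw [hDT]
  rw [compAt_eq (dT ν) h' A row]
  by_cases hrow : row < m + 2
  · match row with
    | 0 =>
      rw [comp'_dT_zero ν (trunc h' A)]
      exact add_zero _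
    | (s+1) =>
      rw [comp'_dT_succ ν (trunc h' A) hrow]
      congr 1
      show compAt ν (trunc (Nat.le_succ M) A) s = _
      rw [compAt_eq ν h (trunc (Nat.le_succ M) A) s]
      rfl
  · rw [comp'_of_ge (dT ν) _ (by omega)]
    have e0 : (fun C : Jet n m => comp' ν C row) = fun _ => 0 :=
      funext fun C => comp'_of_ge ν C (by omega)
    rw [e0, DT_const_zero]
    match row, hrow with
    | 0, hrow => exact absurd (by omega) hrow
    | (s+1), hrow =>
      show 0 + compAt ν (trunc (Nat.le_succ M) A) s = 0
      rw [compAt_eq ν h, comp'_of_ge ν _ (by omega), zero_add]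

/-- component of a linear combination of regarded forms -/
lemma comp'_sum {M : ℕ} {ι : Type*} (s : Finset ι) (m : ι → ℕ) (hm : ∀ j ∈ s, m j ≤ M)
    (ν : ∀ j, OneForm n (m j)) (c : ι → ℝ) (B : Jet n M) (t : ℕ) :
    comp' (fun (B : Jet n M) (i : Fin (M+1)) => ∑ j ∈ s, c j • compAt (ν j) B (i:ℕ)) B t
      = ∑ j ∈ s, c j • compAt (ν j) B t := by
  by_cases ht : t < M + 1
  · exact dif_pos ht
  · rw [comp'_of_ge _ _ (by omega)]
    symm
    refine Finset.sum_eq_zero (fun j hj => ?_)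
    have := hm j hj
    rw [compAt_eq (ν j) (hm j hj), comp'_of_ge _ _ (by omega)]
    simp

/-- d_T of a linear combination of regarded forms, componentwise -/
lemma DTlin {M : ℕ} {ι : Type*} (s : Finset ι) (m : ι → ℕ) (hm : ∀ j ∈ s, m j ≤ M)
    (ν : ∀ j, OneForm n (m j)) (hν : ∀ j ∈ s, Sm (ν j)) (c : ι → ℝ)
    (A : Jet n (M+1)) (row : ℕ) :
    comp' (dT (fun (B : Jet n M) (i : Fin (M+1)) => ∑ j ∈ s, c j • compAt (ν j) B (i:ℕ))) A row
      = ∑ j ∈ s, c j • compAt (dT (ν j)) A row := by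
  set ρ : OneForm n M := fun (B : Jet n M) (i : Fin (M+1)) => ∑ j ∈ s, c j • compAt (ν j) B (i:ℕ) with hρ
  by_cases hrow : row < M + 2
  · have hsum : ∀ t, (fun B : Jet n M => comp' ρ B t)
        = fun B => ∑ j ∈ s, c j • (fun C => compAt (ν j) C t) B :=
      fun t => funext fun B => comp'_sum s m hm ν c B t
    have hdiff : ∀ j ∈ s, Differentiable ℝ (fun C : Jet n M => compAt (ν j) C row) :=
      fun j hj => ((hν j hj).smAt (hm j hj) row).differentiable (by norm_num)
    have key : ∀ t, DT (fun B : Jet n M => comp' ρ B t) A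
        = ∑ j ∈ s, c j • DT (fun C : Jet n M => compAt (ν j) C t) A := by
      intro t
      rw [hsum t, DT_sum_smul s c _ (fun j hj => ((hν j hj).smAt (hm j hj) t).differentiable (by norm_num)) A]
    match row with
    | 0 =>
      rw [comp'_dT_zero ρ A, key 0]
      refine Finset.sum_congr rfl (fun j hj => ?_)
      rw [← lemA (hm j hj) (ν j) (hν j hj) A 0]
      simp
    | (t+1) =>
      rw [comp'_dT_succ ρ A hrow, key (t+1)]
      have e2 : comp' ρ (trunc (Nat.le_succ M) A) t
          = ∑ j ∈ s, c j • compAt (ν j) (trunc (Nat.le_succ M) A) t :=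
        comp'_sum s m hm ν c _ t
      rw [e2, ← Finset.sum_add_distrib]
      refine Finset.sum_congr rfl (fun j hj => ?_)
      rw [← lemA (hm j hj) (ν j) (hν j hj) A (t+1)]
      rw [← smul_add]
  · rw [comp'_of_ge _ _ (by omega)]
    symm
    refine Finset.sum_eq_zero (fun j hj => ?_)
    have := hm j hj
    rw [compAt_eq (dT (ν j)) (Nat.succ_le_succ (hm j hj)), comp'_of_ge _ _ (by omega)]
    simp

lemma pd_smul {M : ℕ} {W : Type*} [NormedAddCommGroup W] [NormedSpace ℝ W]
    (c : ℝ) (F : (Fin M → E') → W) (A : Fin M → E') (hF : DifferentiableAt ℝ F A) (r : ℕ) :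
    pd (fun B => c • F B) r A = c • pd F r A := by
  unfold pd
  split
  · rw [fderiv_fun_const_smul hF c]
    ext v; simp
  · simp

lemma DT_smul {k : ℕ} {W : Type*} [NormedAddCommGroup W] [NormedSpace ℝ W]
    (c : ℝ) (F : Jet n k → W) (hF : Differentiable ℝ F) (A : Jet n (k+1)) :
    DT (fun B => c • F B) A = c • DT F A := by
  unfold DT
  rw [Finset.smul_sum]
  refine Finset.sum_congr rfl (fun j _ => ?_)
  rw [pd_smul c F _ (hF.differentiableAt)]
  simp

/-- Lemma B: `S ∘ d_T = d_T ∘ S + regard`, componentwise. -/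
lemma lemB {m : ℕ} (ν : OneForm n m) (hν : Sm ν) (A : Jet n (m+1)) (i : ℕ) :
    comp' (VS (dT ν)) A i = comp' (dT (VS ν)) A i + compAt ν A i := by
  rw [comp'_VS (dT ν) A i, compAt_eq ν (Nat.le_succ m) A i]
  by_cases h1 : i < m + 1
  · rw [comp'_dT_succ ν A (by omega)]
    have eVS : (fun B : Jet n m => comp' (VS ν) B i)
        = fun B => ((i:ℝ)+1) • comp' ν B (i+1) := funext fun B => comp'_VS ν B i
    match i, h1 with
    | 0, h1 =>
      rw [comp'_dT_zero (VS ν) A, eVS,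
        DT_smul _ _ ((hν 1).differentiable (by norm_num)) A]
      norm_num
    | (s+1), h1 =>
      rw [comp'_dT_succ (VS ν) A (by omega), eVS,
        DT_smul _ _ ((hν (s+2)).differentiable (by norm_num)) A,
        comp'_VS ν (trunc (Nat.le_succ m) A) s]
      push_cast
      ring_nf
      module
  · rw [comp'_of_ge ν _ (by omega)]
    by_cases h2 : i < m + 2
    · -- i = m + 1
      have him : i = m + 1 := by omega
      subst him
      rw [comp'_of_ge (dT ν) A (by omega), smul_zero]
      rw [comp'_dT_succ (VS ν) A (by omega)]
      have eVS0 : (fun B : Jet n m => comp' (VS ν) B (m+1)) = fun _ => 0 :=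
        funext fun B => comp'_of_ge (VS ν) B (by omega)
      rw [eVS0, DT_const_zero, comp'_VS ν _ m, comp'_of_ge ν _ (by omega)]
      simp
    · rw [comp'_of_ge (dT ν) A (by omega : m + 2 ≤ i + 1), smul_zero,
        comp'_of_ge (dT (VS ν)) A (by omega)]
      simp

/-- `S` commutes with regard, componentwise (p = 0 case). -/
lemma lemC0 {m K : ℕ} (ν : OneForm n m) (h : m ≤ K) (A : Jet n K) (i : ℕ) :
    ((i:ℝ) + 1) • compAt ν A (i+1) = compAt (VS ν) A i := by
  rw [compAt_eq ν h A (i+1), compAt_eq (VS ν) h A i, comp'_VS ν (trunc h A) i]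

/-- Lemma C: `S ∘ d_T^{p+1} = d_T^{p+1} ∘ S + (p+1) d_T^p`, componentwise at exact order. -/
lemma lemC {m : ℕ} (ν : OneForm n m) (hν : Sm ν) : ∀ (p : ℕ) (A : Jet n (m+(p+1))) (i : ℕ),
    ((i:ℝ) + 1) • comp' (dTiter (p+1) ν) A (i+1)
      = compAt (dTiter (p+1) (VS ν)) A i + ((p:ℝ)+1) • compAt (dTiter p ν) A i := by
  intro p
  induction p with
  | zero =>
    intro A i
    show ((i:ℝ) + 1) • comp' (dT ν) A (i+1)
      = compAt (dT (VS ν)) A i + (((0:ℕ):ℝ)+1) • compAt ν A i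
    rw [← comp'_VS (dT ν) A i, lemB ν hν A i, compAt_self (dT (VS ν)) A i]
    norm_num
  | succ p ih =>
    intro A i
    set μ : OneForm n (m+(p+1)) := dTiter (p+1) ν with hμ
    have hμs : Sm μ := hν.dtIter (p+1)
    have e1 : ((i:ℝ) + 1) • comp' (dTiter (p+1+1) ν) A (i+1) = comp' (VS (dT μ)) A i := by
      rw [comp'_VS (dT μ) A i]; rfl
    rw [e1, lemB μ hμs A i]
    -- identify VS μ with a linear combination
    set mm : Fin 2 → ℕ := ![m+(p+1), m+p] with hmm
    set νν : ∀ j : Fin 2, OneForm n (mm j) := Fin.cons (dTiter (p+1) (VS ν))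
      (Fin.cons (dTiter p ν) finZeroElim) with hνν
    set cc : Fin 2 → ℝ := ![1, (p:ℝ)+1] with hcc
    have hmle : ∀ j ∈ Finset.univ (α := Fin 2), mm j ≤ m+(p+1) := by
      intro j _; fin_cases j <;> simp [hmm]
    have hννs : ∀ j ∈ Finset.univ (α := Fin 2), Sm (νν j) := by
      intro j _; fin_cases j
      · exact (hν.vs).dtIter (p+1)
      · exact hν.dtIter p
    have hVSμ : VS μ = fun (B : Jet n (m+(p+1))) (t : Fin (m+(p+1)+1)) =>
        ∑ j : Fin 2, cc j • compAt (νν j) B (t:ℕ) := by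
      funext B t
      have hvv : comp' (VS μ) B (t:ℕ) = VS μ B t := dif_pos t.isLt
      rw [← hvv, comp'_VS μ B (t:ℕ), Fin.sum_univ_two]
      show ((t:ℝ)+1) • comp' (dTiter (p+1) ν) B ((t:ℕ)+1)
          = (1:ℝ) • compAt (dTiter (p+1) (VS ν)) B (t:ℕ)
            + ((p:ℝ)+1) • compAt (dTiter p ν) B (t:ℕ)
      rw [ih B (t:ℕ), one_smul]
    rw [hVSμ, DTlin (Finset.univ : Finset (Fin 2)) mm hmle νν hννs cc A i, Fin.sum_univ_two]
    show (1:ℝ) • compAt (dT (dTiter (p+1) (VS ν))) A i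
        + ((p:ℝ)+1) • compAt (dT (dTiter p ν)) A i + compAt (dTiter (p+1) ν) A i = _
    rw [one_smul]
    have h3 : compAt (dT (dTiter p ν)) A i = compAt (dTiter (p+1) ν) A i := rfl
    have e2 : compAt (dT (dTiter (p+1) (VS ν))) A i = compAt (dTiter (p+1+1) (VS ν)) A i := rfl
    rw [h3, e2]
    show _ = compAt (dTiter (p+1+1) (VS ν)) A i + (((p+1:ℕ):ℝ)+1) • compAt (dTiter (p+1) ν) A i
    push_cast
    module

/-- generalized Lemma C at any ambient order -/
lemma lemCgen {m K : ℕ} (ν : OneForm n m) (hν : Sm ν) (p : ℕ) (h : m + (p+1) ≤ K)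
    (A : Jet n K) (i : ℕ) :
    ((i:ℝ) + 1) • compAt (dTiter (p+1) ν) A (i+1)
      = compAt (dTiter (p+1) (VS ν)) A i + ((p:ℝ)+1) • compAt (dTiter p ν) A i := by
  rw [compAt_eq (dTiter (p+1) ν) h A (i+1),
    ← compAt_trunc (dTiter (p+1) (VS ν)) le_rfl h A i,
    ← compAt_trunc (dTiter p ν) (by omega : m + p ≤ m + (p+1)) h A i]
  exact lemC ν hν p (trunc h A) i

lemma comp'_vsIter_ge {k : ℕ} (μ : OneForm n k) :
    ∀ (p t : ℕ), k + 1 ≤ p + t → ∀ B : Jet n k, comp' (VS^[p] μ) B t = 0 := by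
  intro p
  induction p with
  | zero => intro t ht B; exact comp'_of_ge μ B (by omega)
  | succ q ih =>
    intro t ht B
    rw [Function.iterate_succ_apply', comp'_VS (VS^[q] μ) B t, ih (t+1) (by omega) B,
      smul_zero]

lemma vsIter_top {k : ℕ} (μ : OneForm n k) (B : Jet n k) (fr : Fin (k+1)) :
    VS^[k+1] μ B fr = 0 := by
  have : comp' (VS^[k+1] μ) B (fr : ℕ) = VS^[k+1] μ B fr := dif_pos fr.isLt
  rw [← this, comp'_vsIter_ge μ (k+1) (fr:ℕ) (by omega) B]

lemma dT_zero_form {k : ℕ} {μ : OneForm n k} (h : ∀ B fr, μ B fr = 0)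
    (A : Jet n (k+1)) (fr : Fin (k+2)) : dT μ A fr = 0 := by
  have hz : ∀ (B : Jet n k) (t : ℕ), comp' μ B t = 0 := by
    intro B t
    unfold comp'
    split
    · exact h B _
    · rfl
  show DT (fun B => comp' μ B (fr:ℕ)) A + _ = 0
  have e : (fun B : Jet n k => comp' μ B (fr:ℕ)) = fun _ => 0 := funext fun B => hz B _
  rw [e, DT_const_zero]
  match (fr : ℕ) with
  | 0 => exact zero_add 0
  | (s+1) =>
    show 0 + comp' μ (trunc (Nat.le_succ k) A) s = 0
    rw [hz (trunc (Nat.le_succ k) A) s]; exact zero_add 0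

lemma dTiter_zero_form {k : ℕ} {μ : OneForm n k} (h : ∀ B fr, μ B fr = 0) (p : ℕ) :
    ∀ (B : Jet n (k+p)) (fr : Fin (k+p+1)), dTiter p μ B fr = 0 := by
  induction p with
  | zero => exact h
  | succ q ih => exact fun B fr => dT_zero_form ih B fr

lemma compAt_zero_form {m K : ℕ} {μ : OneForm n m} (h : ∀ B fr, μ B fr = 0) (hm : m ≤ K)
    (A : Jet n K) (t : ℕ) : compAt μ A t = 0 := by
  rw [compAt_eq μ hm A t]
  unfold comp'
  split
  · exact h _ _
  · rfl

lemma comp'_Dop {k : ℕ} (lam : OneForm n k) (r : ℕ)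
    (B : Jet n (2*k - r)) (t : ℕ) :
    comp' (Dop r lam) B t = ∑ j ∈ Finset.Icc r k,
      ((-1 : ℝ) ^ (j + r) / (j.factorial : ℝ)) • compAt (dTiter (j - r) (VS^[j] lam)) B t := by
  exact comp'_sum (Finset.Icc r k) (fun j => k + (j - r))
    (fun j hj => by simp only [Finset.mem_Icc] at hj; show k + (j - r) ≤ 2*k - r; omega)
    (fun j => dTiter (j - r) (VS^[j] lam))
    (fun j => ((-1 : ℝ) ^ (j + r) / (j.factorial : ℝ))) B t

lemma coeff_id (r q : ℕ) (h : r ≤ q) :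
    ((-1:ℝ)^(q+r)/(q.factorial) + ((-1:ℝ)^((q+1)+r)/((q+1).factorial)) * ((q+1:ℝ) - r))
      = (r:ℝ) * ((-1:ℝ)^((q+1)+(r+1))/((q+1).factorial)) := by
  have h1 : ((-1:ℝ))^((q+1)+r) = -(-1:ℝ)^(q+r) := by
    rw [show q+1+r = (q+r)+1 from by omega, pow_succ]; ring
  have h2 : ((-1:ℝ))^((q+1)+(r+1)) = (-1:ℝ)^(q+r) := by
    rw [show q+1+(r+1) = (q+r)+2 from by omega, pow_add]; norm_num
  rw [h1, h2, Nat.factorial_succ]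
  have hq : (q.factorial:ℝ) ≠ 0 := Nat.cast_ne_zero.2 q.factorial_ne_zero
  have hq1 : ((q:ℝ)+1) ≠ 0 := by positivity
  push_cast
  field_simp
  ring

lemma dTiter_zero_eq {m : ℕ} (ν : OneForm n m) : dTiter 0 ν = ν := rfl

/-- Part (ii): `S(𝔻_r λ) = r ⬝ 𝔻_{r+1} λ`. -/
lemma partII {k : ℕ} (lam : OneForm n k) (hS : Sm lam) (r : ℕ) (hr : r ≤ k)
    (A : Jet n (2*k - r)) (i : ℕ) :
    comp' (VS (Dop r lam)) A i = (r:ℝ) • compAt (Dop (r+1) lam) A i := by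
  rw [comp'_VS (Dop r lam) A i, comp'_Dop lam r A (i+1), Finset.smul_sum]
  have per : ∀ j ∈ Finset.Icc r k,
      ((i:ℝ)+1) • (((-1:ℝ)^(j+r)/(j.factorial:ℝ)) • compAt (dTiter (j-r) (VS^[j] lam)) A (i+1))
      = ((-1:ℝ)^(j+r)/(j.factorial:ℝ)) • compAt (dTiter (j-r) (VS^[j+1] lam)) A i
        + (((-1:ℝ)^(j+r)/(j.factorial:ℝ)) * ((j:ℝ) - (r:ℝ)))
            • compAt (dTiter (j-r-1) (VS^[j] lam)) A i := by
    intro j hj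
    simp only [Finset.mem_Icc] at hj
    rw [smul_comm]
    rcases Nat.eq_or_lt_of_le hj.1 with he | hlt
    · subst he
      simp only [sub_self, mul_zero, zero_smul, add_zero]
      have h0 : r - r = 0 := Nat.sub_self r
      rw [h0, dTiter_zero_eq, dTiter_zero_eq,
        lemC0 (VS^[r] lam) (by omega : k ≤ 2*k - r) A i,
        Function.iterate_succ_apply' VS r lam]
    · set p := j - r - 1 with hp
      have hj1 : j - r = p + 1 := by omega
      rw [hj1,
        lemCgen (VS^[j] lam) (hS.vsIter j) p (by omega : k + (p+1) ≤ 2*k - r) A i,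
        ← Function.iterate_succ_apply' VS j lam]
      have hc : ((p:ℕ):ℝ) + 1 = (j:ℝ) - (r:ℝ) := by
        rw [hp]
        rw [show j - r - 1 = j - (r+1) from by omega,
          Nat.cast_sub (by omega : r + 1 ≤ j)]
        push_cast; ring
      rw [hc, smul_add, smul_smul]
  rw [Finset.sum_congr rfl per, Finset.sum_add_distrib]
  -- reindex the first sum
  set F : ℕ → (EuclideanSpace ℝ (Fin n) →L[ℝ] ℝ) := fun j =>
    ((-1:ℝ)^(j+r)/(j.factorial:ℝ)) • compAt (dTiter (j-r) (VS^[j+1] lam)) A i with hF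
  have hre : ∑ j ∈ Finset.Icc r k, F j = ∑ j ∈ Finset.Icc (r+1) (k+1), F (j-1) := by
    refine Finset.sum_nbij' (fun a => a + 1) (fun b => b - 1) ?_ ?_ ?_ ?_ ?_
    · intro a ha; simp only [Finset.mem_Icc] at *; omega
    · intro a ha; simp only [Finset.mem_Icc] at *; omega
    · intro a _; show a + 1 - 1 = a; omega
    · intro a ha; simp only [Finset.mem_Icc] at ha; show a - 1 + 1 = a; omega
    · intro a _; simp
  rw [show (∑ j ∈ Finset.Icc r k, ((-1:ℝ)^(j+r)/(j.factorial:ℝ)) •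
      compAt (dTiter (j-r) (VS^[j+1] lam)) A i) = ∑ j ∈ Finset.Icc r k, F j from rfl,
    hre, Finset.sum_Icc_succ_top (by omega : r + 1 ≤ k + 1)]
  have hFk : F ((k+1) - 1) = 0 := by
    have hz : compAt (dTiter (k-r) (VS^[k+1] lam)) A i = 0 :=
      compAt_zero_form (dTiter_zero_form (vsIter_top lam) (k-r)) (by omega : k + (k-r) ≤ 2*k - r) A i
    show ((-1:ℝ)^(k+r)/(k.factorial:ℝ)) • compAt (dTiter (k-r) (VS^[k+1] lam)) A i = 0
    rw [hz, smul_zero]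
  rw [hFk, add_zero]
  -- restrict the second sum
  have hsub : (∑ j ∈ Finset.Icc r k, (((-1:ℝ)^(j+r)/(j.factorial:ℝ)) * ((j:ℝ) - (r:ℝ)))
        • compAt (dTiter (j-r-1) (VS^[j] lam)) A i)
      = ∑ j ∈ Finset.Icc (r+1) k, (((-1:ℝ)^(j+r)/(j.factorial:ℝ)) * ((j:ℝ) - (r:ℝ)))
        • compAt (dTiter (j-r-1) (VS^[j] lam)) A i := by
    symm
    refine Finset.sum_subset ?_ ?_
    · intro x hx; simp only [Finset.mem_Icc] at *; omega
    · intro x hx hx'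
      simp only [Finset.mem_Icc] at hx hx'
      have : x = r := by omega
      subst this
      rw [sub_self, mul_zero, zero_smul]
  rw [hsub]
  -- right-hand side
  rw [compAt_eq (Dop (r+1) lam) (by omega : 2*k - (r+1) ≤ 2*k - r) A i,
    comp'_Dop lam (r+1) (trunc _ A) i, Finset.smul_sum]
  rw [← Finset.sum_add_distrib]
  refine Finset.sum_congr rfl (fun j hj => ?_)
  simp only [Finset.mem_Icc] at hj
  obtain ⟨q, rfl⟩ : ∃ q, j = q + 1 := ⟨j - 1, by omega⟩
  rw [compAt_trunc (dTiter (q+1-(r+1)) (VS^[q+1] lam)) (by omega : k + (q+1-(r+1)) ≤ 2*k - (r+1))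
    (by omega : 2*k - (r+1) ≤ 2*k - r) A i]
  rw [show q + 1 - 1 = q from rfl, show q + 1 - (r+1) = q - r from by omega,
    show q + 1 - r - 1 = q - r from by omega, hF]
  rw [smul_smul, ← add_smul]
  congr 1
  have := coeff_id r q (by omega : r ≤ q)
  push_cast at this ⊢
  linear_combination this

/-- Part (i). -/
lemma partI {k : ℕ} (lam : OneForm n k) (hS : Sm lam) (r : ℕ) (h1 : 1 ≤ r) (h2 : r ≤ k)
    (A : Jet n (2*k - r + 1)) (i : ℕ) :
    compAt (Dop (r - 1) lam) A i =
      (1 / ((r - 1).factorial : ℝ)) • compAt (VS^[r - 1] lam) A i -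
        compAt (dT (Dop r lam)) A i := by
  have hM : 2*k - (r-1) ≤ 2*k - r + 1 := by omega
  rw [compAt_eq (Dop (r-1) lam) hM A i, comp'_Dop lam (r-1) (trunc hM A) i]
  have e1 : ∀ j ∈ Finset.Icc (r-1) k,
      ((-1:ℝ)^(j+(r-1))/(j.factorial:ℝ)) • compAt (dTiter (j-(r-1)) (VS^[j] lam)) (trunc hM A) i
      = ((-1:ℝ)^(j+(r-1))/(j.factorial:ℝ)) • compAt (dTiter (j-(r-1)) (VS^[j] lam)) A i := by
    intro j hj
    simp only [Finset.mem_Icc] at hj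
    rw [compAt_trunc _ (by omega : k + (j-(r-1)) ≤ 2*k - (r-1)) hM A i]
  rw [Finset.sum_congr rfl e1]
  have hins : Finset.Icc (r-1) k = insert (r-1) (Finset.Icc r k) := by
    ext x; simp only [Finset.mem_Icc, Finset.mem_insert]; omega
  rw [hins, Finset.sum_insert (by simp only [Finset.mem_Icc]; omega)]
  have h00 : r - 1 - (r-1) = 0 := Nat.sub_self _
  rw [h00, dTiter_zero_eq]
  have hpow : (-1:ℝ)^((r-1)+(r-1)) = 1 := Even.neg_one_pow ⟨r-1, rfl⟩
  rw [hpow]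
  have e2 : ∀ j ∈ Finset.Icc r k,
      ((-1:ℝ)^(j+(r-1))/(j.factorial:ℝ)) • compAt (dTiter (j-(r-1)) (VS^[j] lam)) A i
      = -(((-1:ℝ)^(j+r)/(j.factorial:ℝ)) • compAt (dT (dTiter (j-r) (VS^[j] lam))) A i) := by
    intro j hj
    simp only [Finset.mem_Icc] at hj
    have hjj : j - (r-1) = (j-r) + 1 := by omega
    rw [hjj]
    have hneg : (-1:ℝ)^(j+(r-1)) = -(-1:ℝ)^(j+r) := by
      rw [show j + r = (j+(r-1))+1 from by omega, pow_succ]; ring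
    rw [hneg, neg_div]
    exact neg_smul ((-1:ℝ)^(j+r)/(j.factorial:ℝ)) (compAt (dTiter (j-r+1) (VS^[j] lam)) A i)
  rw [Finset.sum_congr rfl e2]
  have eRHS : compAt (dT (Dop r lam)) A i
      = ∑ j ∈ Finset.Icc r k, ((-1:ℝ)^(j+r)/(j.factorial:ℝ)) •
          compAt (dT (dTiter (j-r) (VS^[j] lam))) A i := by
    rw [compAt_self (dT (Dop r lam)) A i]
    exact DTlin (Finset.Icc r k) (fun j => k + (j - r))
      (fun j hj => by simp only [Finset.mem_Icc] at hj; show k + (j-r) ≤ 2*k - r; omega)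
      (fun j => dTiter (j - r) (VS^[j] lam))
      (fun j hj => (hS.vsIter j).dtIter (j-r))
      (fun j => ((-1:ℝ)^(j+r)/(j.factorial:ℝ))) A i
  rw [eRHS, Finset.sum_neg_distrib, sub_eq_add_neg]

/-- Part (iv) auxiliary. -/
lemma partIV_aux {k : ℕ} (lam : OneForm n k) (hS : Sm lam) :
    ∀ q, q ≤ k → ∀ (A : Jet n (2*k - 1)) (i : ℕ),
      comp' (VS^[q] (Dop 1 lam)) A i = (q.factorial : ℝ) • compAt (Dop (q+1) lam) A i := by
  intro q
  induction q with
  | zero =>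
    intro _ A i
    show comp' (Dop 1 lam) A i = ((Nat.factorial 0 : ℕ):ℝ) • compAt (Dop (0+1) lam) A i
    rw [compAt_self (Dop 1 lam) A i]
    norm_num
  | succ q ih =>
    intro hq A i
    have hle : 2*k - (q+1) ≤ 2*k - 1 := by omega
    rw [Function.iterate_succ_apply', comp'_VS (VS^[q] (Dop 1 lam)) A i, ih (by omega) A (i+1),
      smul_comm ((i:ℝ)+1) ((q.factorial:ℝ)),
      compAt_eq (Dop (q+1) lam) hle A (i+1),
      ← comp'_VS (Dop (q+1) lam) (trunc hle A) i,
      partII lam hS (q+1) hq (trunc hle A) i,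
      compAt_trunc (Dop (q+1+1) lam) (by omega : 2*k - (q+1+1) ≤ 2*k - (q+1)) hle A i,
      smul_smul]
    congr 1
    push_cast [Nat.factorial_succ]
    ring

end DopAux

/-- **Relations among the operators `𝔻_r`** (coordinate model): for a smooth 1-form `λ`
of order `k`:
(i) for `1 ≤ r ≤ k`, `𝔻_{r−1}(λ) = (1/(r−1)!)·S^{r−1}λ − d_T(𝔻_r(λ))` as 1-forms of
order `2k−r+1`;
(ii) for `0 ≤ r ≤ k`, `S(𝔻_r(λ)) = r·𝔻_{r+1}(λ)` as 1-forms of order `2k−r`.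
In particular `S(𝔻_0(λ)) = 0` and `S^k(𝔻_1(λ)) = 0`. -/
theorem Dop_relations (n k : ℕ) (hn : 1 ≤ n)
    (lam : OneForm n k) (hlam : ContDiff ℝ (⊤ : ℕ∞) lam) :
    (∀ r : ℕ, 1 ≤ r → r ≤ k → ∀ (A : Jet n (2 * k - r + 1)) (i : ℕ),
        compAt (Dop (r - 1) lam) A i =
          (1 / ((r - 1).factorial : ℝ)) • compAt (VS^[r - 1] lam) A i -
            compAt (dT (Dop r lam)) A i) ∧
    (∀ r : ℕ, r ≤ k → ∀ (A : Jet n (2 * k - r)) (i : ℕ),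
        comp' (VS (Dop r lam)) A i = (r : ℝ) • compAt (Dop (r + 1) lam) A i) ∧
    (∀ (A : Jet n (2 * k)) (i : ℕ), comp' (VS (Dop 0 lam)) A i = 0) ∧
    (∀ (A : Jet n (2 * k - 1)) (i : ℕ), comp' (VS^[k] (Dop 1 lam)) A i = 0) := by
  have hS : DopAux.Sm lam := DopAux.Sm.of_contDiff hlam
  refine ⟨fun r h1 h2 A i => DopAux.partI lam hS r h1 h2 A i,
          fun r hr A i => DopAux.partII lam hS r hr A i,
          fun A i => ?_, fun A i => ?_⟩
  · rw [DopAux.partII lam hS 0 (Nat.zero_le k) A i]; norm_num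
  · rw [DopAux.partIV_aux lam hS k le_rfl A i]
    have hz : compAt (Dop (k+1) lam) A i = 0 := by
      rw [DopAux.compAt_eq (Dop (k+1) lam) (by omega : 2*k - (k+1) ≤ 2*k - 1) A i,
        DopAux.comp'_Dop lam (k+1) _ i, Finset.Icc_eq_empty (by omega), Finset.sum_empty]
    rw [hz, smul_zero]

end
end

section
/- (The complete lift intertwines the total time derivative; Proposition 4.3 in the coordinate model.) Let n ≥ 1, k ≥ 0, and let η : ℝ^n → ℝ^n be a smooth vector field. Define its prolongations N^{(r)} : J_r → ℝ^n by N^{(0)}(A) := η(A_0) and N^{(r+1)} := D_T N^{(r)}. For a smooth F : J_k → ℝ define the complete-lift derivative (d_{η,k}F)(A) := ∑_{r=0}^{k} ∂_rF(A)( N^{(r)}(A|_{0,…,r}) ), where A|_{0,…,r} ∈ J_r is the truncation of A to slots 0,…,r. Then for every smooth F : J_k → ℝ and every A ∈ J_{k+1}: D_T(d_{η,k}F)(A) = (d_{η,k+1}(D_TF))(A). -/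
noncomputable section

/-- The prolongations of a vector field `η` on `ℝ^n`:
`N^{(0)}(A) = η(A₀)` and `N^{(r+1)} = D_T N^{(r)}`. -/
def Nprol {n : ℕ} (η : EuclideanSpace ℝ (Fin n) → EuclideanSpace ℝ (Fin n)) :
    (r : ℕ) → Jet n r → EuclideanSpace ℝ (Fin n)
  | 0 => fun A => η (A 0)
  | (r + 1) => DT (Nprol η r)

/-- The complete-lift derivative of `F : J_k → ℝ` along the vector field `η`:
`(d_{η,k}F)(A) = ∑_{r=0}^{k} ∂_r F(A)(N^{(r)}(A|_{0,…,r}))`. -/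
def dEta {n k : ℕ} (η : EuclideanSpace ℝ (Fin n) → EuclideanSpace ℝ (Fin n))
    (F : Jet n k → ℝ) (A : Jet n k) : ℝ :=
  ∑ r : Fin (k + 1),
    pd F r A (Nprol η r (fun i : Fin ((r : ℕ) + 1) => A ⟨i, by omega⟩))

section Aux

variable {n k m : ℕ} {W : Type*} [NormedAddCommGroup W] [NormedSpace ℝ W]

/-- Truncation as a continuous linear map. -/
def truncL (n : ℕ) {k m : ℕ} (h : m ≤ k) : Jet n k →L[ℝ] Jet n m :=
  ContinuousLinearMap.pi fun i => ContinuousLinearMap.proj ⟨(i : ℕ), by omega⟩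

/-- Shift as a continuous linear map. -/
def shiftL (n k : ℕ) : Jet n (k + 1) →L[ℝ] Jet n k :=
  ContinuousLinearMap.pi fun j => ContinuousLinearMap.proj j.succ

lemma pd_apply_s14 (F : (Fin m → EuclideanSpace ℝ (Fin n)) → W) (r : Fin m)
    (A : Fin m → EuclideanSpace ℝ (Fin n)) (v : EuclideanSpace ℝ (Fin n)) :
    pd F (r : ℕ) A v = fderiv ℝ F A (Pi.single r v) := by
  rw [pd, dif_pos r.isLt, ContinuousLinearMap.comp_apply]
  congr 1
  funext i
  rw [ContinuousLinearMap.pi_apply]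
  have hr : (⟨(r : ℕ), r.isLt⟩ : Fin m) = r := rfl
  rw [hr]
  rcases eq_or_ne i r with h | h
  · subst h
    rw [Pi.single_eq_same, Pi.single_eq_same]
    rfl
  · rw [Pi.single_eq_of_ne h, Pi.single_eq_of_ne h]
    rfl

lemma DT_eq (F : Jet n k → W) (A : Jet n (k + 1)) :
    DT F A = fderiv ℝ F (trunc (Nat.le_succ k) A) (shiftL n k A) := by
  unfold DT
  simp_rw [pd_apply_s14]
  rw [← map_sum]
  congr 1
  exact Finset.univ_sum_single (fun j : Fin (k + 1) => A j.succ)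

/-- The vector of prolongations at a jet. -/
def NV (η : EuclideanSpace ℝ (Fin n) → EuclideanSpace ℝ (Fin n)) {k : ℕ} (A : Jet n k) :
    Jet n k :=
  fun r => Nprol η r (trunc (Nat.lt_succ_iff.mp r.isLt) A)

lemma dEta_eq (η : EuclideanSpace ℝ (Fin n) → EuclideanSpace ℝ (Fin n))
    (F : Jet n k → ℝ) (A : Jet n k) :
    dEta η F A = fderiv ℝ F A (NV η A) := by
  show (∑ r : Fin (k + 1), pd F (r : ℕ) A (NV η A r)) = _
  simp_rw [pd_apply_s14]
  rw [← map_sum]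
  congr 1
  exact Finset.univ_sum_single (NV η A)

lemma one_le_top' : (1 : WithTop ℕ∞) ≤ ((⊤ : ℕ∞) : WithTop ℕ∞) := by
  exact_mod_cast ENat.natCast_le_of_coe_top_le_withTop le_rfl 1

lemma top_add_one_le : ((⊤ : ℕ∞) : WithTop ℕ∞) + 1 ≤ ((⊤ : ℕ∞) : WithTop ℕ∞) :=
  le_of_eq ENat.coe_top_add_one

lemma two_le_top : (2 : WithTop ℕ∞) ≤ ((⊤ : ℕ∞) : WithTop ℕ∞) := by
  exact_mod_cast ENat.natCast_le_of_coe_top_le_withTop le_rfl 2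

lemma contDiff_DT (F : Jet n k → W) (hF : ContDiff ℝ (⊤ : ℕ∞) F) :
    ContDiff ℝ (⊤ : ℕ∞) (DT F) := by
  have h : DT F = fun A : Jet n (k + 1) =>
      (fderiv ℝ F (truncL n (Nat.le_succ k) A)) (shiftL n k A) :=
    funext fun A => DT_eq F A
  rw [h]
  exact ((hF.fderiv_right top_add_one_le).comp
    (truncL n (Nat.le_succ k)).contDiff).clm_apply (shiftL n k).contDiff

lemma contDiff_Nprol (η : EuclideanSpace ℝ (Fin n) → EuclideanSpace ℝ (Fin n))
    (hη : ContDiff ℝ (⊤ : ℕ∞) η) : ∀ r, ContDiff ℝ (⊤ : ℕ∞) (Nprol η r)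
  | 0 => hη.comp (ContinuousLinearMap.proj (R := ℝ) (φ := fun _ : Fin 1 => EuclideanSpace ℝ (Fin n)) (0 : Fin 1)).contDiff
  | (r + 1) => contDiff_DT _ (contDiff_Nprol η hη r)

lemma contDiff_NV (η : EuclideanSpace ℝ (Fin n) → EuclideanSpace ℝ (Fin n))
    (hη : ContDiff ℝ (⊤ : ℕ∞) η) :
    ContDiff ℝ (⊤ : ℕ∞) (NV η (n := n) (k := k)) :=
  contDiff_pi.2 fun r =>
    (contDiff_Nprol η hη r).comp (truncL n (Nat.lt_succ_iff.mp r.isLt)).contDiff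

lemma fderiv_NV (η : EuclideanSpace ℝ (Fin n) → EuclideanSpace ℝ (Fin n))
    (hη : ContDiff ℝ (⊤ : ℕ∞) η) (A : Jet n (k + 1)) :
    fderiv ℝ (NV η (n := n) (k := k)) (trunc (Nat.le_succ k) A) (shiftL n k A)
      = fun r : Fin (k + 1) =>
          Nprol η ((r : ℕ) + 1) (trunc (by omega : (r : ℕ) + 1 ≤ k + 1) A) := by
  have hφ : ∀ r : Fin (k + 1), DifferentiableAt ℝ
      (fun B : Jet n k => Nprol η (r : ℕ) (truncL n (Nat.lt_succ_iff.mp r.isLt) B))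
      (trunc (Nat.le_succ k) A) :=
    fun r => (((contDiff_Nprol η hη r).comp
      (truncL n (Nat.lt_succ_iff.mp r.isLt)).contDiff).differentiable (by simp)).differentiableAt
  have h : fderiv ℝ (NV η (n := n) (k := k)) (trunc (Nat.le_succ k) A)
      = ContinuousLinearMap.pi fun r : Fin (k + 1) =>
          fderiv ℝ (fun B : Jet n k => Nprol η (r : ℕ) (truncL n (Nat.lt_succ_iff.mp r.isLt) B))
            (trunc (Nat.le_succ k) A) := fderiv_pi hφ
  rw [h]
  funext r
  have hr : (r : ℕ) ≤ k := Nat.lt_succ_iff.mp r.isLt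
  have hc : fderiv ℝ
      (fun B : Jet n k => Nprol η (r : ℕ) (truncL n hr B)) (trunc (Nat.le_succ k) A)
      = (fderiv ℝ (Nprol η (r : ℕ)) (truncL n hr (trunc (Nat.le_succ k) A))).comp
          (truncL n hr) := by
    rw [show (fun B : Jet n k => Nprol η (r : ℕ) (truncL n hr B))
        = (Nprol η (r : ℕ)) ∘ (truncL n hr) from rfl]
    rw [fderiv_comp _ ((contDiff_Nprol η hη r).differentiable (by simp)).differentiableAt
      (truncL n hr).differentiableAt, (truncL n hr).fderiv]
  rw [ContinuousLinearMap.pi_apply, hc]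
  show fderiv ℝ (Nprol η (r : ℕ)) _ _ = Nprol η ((r : ℕ) + 1) _
  rw [show Nprol η ((r : ℕ) + 1) = DT (Nprol η (r : ℕ)) from rfl,
    DT_eq (Nprol η (r : ℕ)) (trunc (by omega : (r : ℕ) + 1 ≤ k + 1) A)]
  rfl

end Aux

/-- **The complete lift intertwines the total time derivative** (Proposition 4.3 of the
paper, in the coordinate model): for a smooth vector field `η` on `ℝ^n` and every smooth
`F : J_k → ℝ`, `D_T(d_{η,k}F) = d_{η,k+1}(D_T F)` on `J_{k+1}`. -/
theorem complete_lift_intertwines_total_time_derivative (n k : ℕ) (hn : 1 ≤ n)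
    (η : EuclideanSpace ℝ (Fin n) → EuclideanSpace ℝ (Fin n)) (hη : ContDiff ℝ (⊤ : ℕ∞) η)
    (F : Jet n k → ℝ) (hF : ContDiff ℝ (⊤ : ℕ∞) F) (A : Jet n (k + 1)) :
    DT (dEta η F) A = dEta η (DT F) A := by
  have hfd : ContDiff ℝ (⊤ : ℕ∞) (fderiv ℝ F) := hF.fderiv_right top_add_one_le
  have hdEta : dEta η F = fun B : Jet n k => (fderiv ℝ F B) (NV η B) :=
    funext fun B => dEta_eq η F B
  have hDT : DT F = fun B : Jet n (k + 1) =>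
      (fderiv ℝ F (truncL n (Nat.le_succ k) B)) (shiftL n k B) :=
    funext fun B => DT_eq F B
  -- left-hand side
  rw [DT_eq (dEta η F) A, hdEta,
    fderiv_clm_apply ((hfd.differentiable (by simp)).differentiableAt)
      (((contDiff_NV η hη (k := k)).differentiable (by simp)).differentiableAt)]
  -- right-hand side
  have hcd : DifferentiableAt ℝ
      (fun B : Jet n (k + 1) => fderiv ℝ F (truncL n (Nat.le_succ k) B)) A :=
    (((hfd.comp (truncL n (Nat.le_succ k)).contDiff)).differentiable
      (by simp)).differentiableAt
  rw [dEta_eq η (DT F) A, hDT, fderiv_clm_apply hcd ((shiftL n k).differentiableAt)]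
  rw [(shiftL n k).fderiv]
  have hc : fderiv ℝ (fun B : Jet n (k + 1) =>
        fderiv ℝ F (truncL n (Nat.le_succ k) B)) A
      = (fderiv ℝ (fderiv ℝ F) (trunc (Nat.le_succ k) A)).comp
          (truncL n (Nat.le_succ k)) := by
    rw [show (fun B : Jet n (k + 1) => fderiv ℝ F (truncL n (Nat.le_succ k) B))
        = (fderiv ℝ F) ∘ (truncL n (Nat.le_succ k)) from rfl,
      fderiv_comp _ ((hfd.differentiable (by simp)).differentiableAt)
        ((truncL n (Nat.le_succ k)).differentiableAt),
      (truncL n (Nat.le_succ k)).fderiv]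
    rfl
  rw [hc]
  simp only [ContinuousLinearMap.add_apply, ContinuousLinearMap.comp_apply,
    ContinuousLinearMap.flip_apply]
  have h1 : fderiv ℝ (NV η (n := n) (k := k)) (trunc (Nat.le_succ k) A) (shiftL n k A)
      = shiftL n k (NV η A) := by
    rw [fderiv_NV η hη A]; rfl
  have h2 : truncL n (Nat.le_succ k) (NV η A) = NV η (trunc (Nat.le_succ k) A) := rfl
  have hsym : fderiv ℝ (fderiv ℝ F) (trunc (Nat.le_succ k) A) (shiftL n k A)
        (NV η (trunc (Nat.le_succ k) A))
      = fderiv ℝ (fderiv ℝ F) (trunc (Nat.le_succ k) A) (NV η (trunc (Nat.le_succ k) A))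
        (shiftL n k A) :=
    (hF.contDiffAt.isSymmSndFDerivAt (by simpa [minSmoothness_of_isRCLikeNormedField] using two_le_top)) _ _
  rw [h1, h2, hsym]
  rfl

end
end
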